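/- arXiv:1412.4444 — 5 statements merged into one kernel-verified Lean document; each statement's English description precedes it below -/
import Mathlib

section
/- Let 𝒳 be a finite alphabet and n a positive integer. A rate function R(ε,P) (defined for ε∈(0,1) and distributions P on 𝒳) is n-achievable if there exists a single n-length fixed-to-variable code φ such that R(φ;ε,P) ≤ R(ε,P) for all ε∈(0,1) and all P. A function M(ε,P) is n-achievable (for guessing) if there exists a single guessing function G on 𝒳^n such that M(G;ε,P) ≤ M(ε,P) for all ε∈(0,1) and all P. Theorem: R(ε,P) is n-achievable if and only if there exists an n-achievable M(ε,P) such that ⌊log₂ M(ε,P)⌋ ≤ n·R(ε,P) for all ε∈(0,1) and all P. -/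
open scoped BigOperators
open Classical

/-- `P` is a probability distribution on the finite alphabet `𝒳`. -/
def IsDist {𝒳 : Type*} [Fintype 𝒳] (P : 𝒳 → ℝ) : Prop :=
  (∀ x, 0 ≤ P x) ∧ ∑ x, P x = 1

/-- Probability of the event `S` under the i.i.d. product distribution `P^n`. -/
noncomputable def seqProb {𝒳 : Type*} [Fintype 𝒳] (P : 𝒳 → ℝ) (n : ℕ)
    (S : (Fin n → 𝒳) → Prop) : ℝ :=
  ∑ xs : Fin n → 𝒳, if S xs then ∏ i, P (xs i) else 0

/-- The ε-coding rate of an n-length fixed-to-variable code φ: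
`min{k/n : k ∈ ℤ≥0, P(ℓ(φ(Xⁿ)) > k) ≤ ε}`. -/
noncomputable def epsRate {𝒳 : Type*} [Fintype 𝒳] (n : ℕ)
    (φ : (Fin n → 𝒳) → List Bool) (ε : ℝ) (P : 𝒳 → ℝ) : ℝ :=
  ((sInf {k : ℕ | seqProb P n (fun xs => k < (φ xs).length) ≤ ε} : ℕ) : ℝ) / n

/-- Entropy in bits: `H(P) = ∑ₓ −P(x) log₂ P(x)`. -/
noncomputable def ent {𝒳 : Type*} [Fintype 𝒳] (P : 𝒳 → ℝ) : ℝ :=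
  ∑ x, -(P x * Real.logb 2 (P x))

/-- Varentropy: `V(P) = ∑ₓ P(x) (−log₂ P(x) − H(P))²`. -/
noncomputable def varent {𝒳 : Type*} [Fintype 𝒳] (P : 𝒳 → ℝ) : ℝ :=
  ∑ x, P x * (-(Real.logb 2 (P x)) - ent P) ^ 2

/-- The type (empirical distribution) of a sequence. -/
noncomputable def typeOf {𝒳 : Type*} [Fintype 𝒳] {n : ℕ} (xs : Fin n → 𝒳) : 𝒳 → ℝ :=
  fun x => ((Finset.univ.filter fun i => xs i = x).card : ℝ) / n

/-- The size of the type class `T_t = {xⁿ : t_{xⁿ} = t}`. -/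
noncomputable def typeClassCard {𝒳 : Type*} [Fintype 𝒳] (n : ℕ) (t : 𝒳 → ℝ) : ℕ :=
  (Finset.univ.filter fun ys : Fin n → 𝒳 => typeOf ys = t).card

/-- Cardinality of the support `𝒳_P = {x : P(x) > 0}`. -/
noncomputable def suppCard {𝒳 : Type*} [Fintype 𝒳] (P : 𝒳 → ℝ) : ℕ :=
  (Finset.univ.filter fun x => 0 < P x).card

/-- The standard Gaussian tail function `Q(x) = ∫ₓ^∞ e^{−t²/2}/√(2π) dt`. -/
noncomputable def gaussQ (x : ℝ) : ℝ :=
  ∫ t in Set.Ioi x, Real.exp (-t ^ 2 / 2) / Real.sqrt (2 * Real.pi)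

/-- The inverse of the Gaussian tail function `Q`. -/
noncomputable def gaussQinv : ℝ → ℝ := Function.invFun gaussQ

/-- A guessing function's tail quantile `M(G;ε,P) = min{m ≥ 1 : P(G(Xⁿ) > m) ≤ ε}`. -/
noncomputable def guessM {𝒳 : Type*} [Fintype 𝒳] (n : ℕ) (G : (Fin n → 𝒳) → ℕ)
    (ε : ℝ) (P : 𝒳 → ℝ) : ℕ :=
  sInf {m : ℕ | 1 ≤ m ∧ seqProb P n (fun xs => m < G xs) ≤ ε}

/-- A rate function `R(ε,P)` is n-achievable if a single n-length fixed-to-variable code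
(an injective map into binary strings) attains it for every ε ∈ (0,1) and distribution P. -/
def RateAchievable (𝒳 : Type*) [Fintype 𝒳] (n : ℕ) (R : ℝ → (𝒳 → ℝ) → ℝ) : Prop :=
  ∃ φ : (Fin n → 𝒳) → List Bool, Function.Injective φ ∧
    ∀ ε ∈ Set.Ioo (0 : ℝ) 1, ∀ P : 𝒳 → ℝ, IsDist P → epsRate n φ ε P ≤ R ε P

/-- `M(ε,P)` is n-achievable for guessing if a single guessing function
(a bijection from 𝒳ⁿ onto {1,…,|𝒳|ⁿ}) attains it for every ε ∈ (0,1) and distribution P. -/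
def GuessAchievable (𝒳 : Type*) [Fintype 𝒳] (n : ℕ) (M : ℝ → (𝒳 → ℝ) → ℝ) : Prop :=
  ∃ G : (Fin n → 𝒳) → ℕ, Function.Injective G ∧
    (∀ xs, 1 ≤ G xs ∧ G xs ≤ Fintype.card 𝒳 ^ n) ∧
    ∀ ε ∈ Set.Ioo (0 : ℝ) 1, ∀ P : 𝒳 → ℝ, IsDist P → (guessM n G ε P : ℝ) ≤ M ε P

/-! Auxiliary machinery for `stmt0`. -/

private def enc : List Bool → ℕ
  | [] => 0
  | b :: t => (if b then 2 else 1) + 2 * enc t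

private lemma enc_add_two (l : List Bool) : enc l + 2 ≤ 2 ^ (l.length + 1) := by
  induction l with
  | nil => simp [enc]
  | cons b t ih =>
    simp only [enc, List.length_cons]
    have : (if b then 2 else 1) ≤ 2 := by split <;> omega
    calc (if b then 2 else 1) + 2 * enc t + 2 ≤ 2 * (enc t + 2) := by omega
      _ ≤ 2 * 2 ^ (t.length + 1) := by omega
      _ = 2 ^ (t.length + 1 + 1) := by ring

private lemma le_enc (l : List Bool) : 2 ^ l.length ≤ enc l + 1 := by
  induction l with
  | nil => simp [enc]
  | cons b t ih =>
    simp only [enc, List.length_cons]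
    have : 1 ≤ (if b then 2 else 1) := by split <;> omega
    calc 2 ^ (t.length + 1) = 2 * 2 ^ t.length := by ring
      _ ≤ 2 * (enc t + 1) := by omega
      _ ≤ (if b then 2 else 1) + 2 * enc t + 1 := by omega

private lemma enc_injective : Function.Injective enc := by
  intro l
  induction l with
  | nil =>
    intro m h
    cases m with
    | nil => rfl
    | cons b t => simp [enc] at h; split at h <;> omega
  | cons b t ih =>
    intro m h
    cases m with
    | nil => simp [enc] at h; split at h <;> omega
    | cons c s =>
      simp only [enc] at h
      cases b <;> cases c <;> norm_num at h
      · rw [ih (by omega : enc t = enc s)]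
      · exact absurd h (by omega)
      · exact absurd h (by omega)
      · rw [ih (by omega : enc t = enc s)]

private lemma enc_surjective : Function.Surjective enc := by
  intro m
  induction m using Nat.strong_induction_on with
  | _ m ih =>
    rcases Nat.eq_zero_or_pos m with h0 | h1
    · exact ⟨[], by simp [enc, h0]⟩
    · have hq : (m - 1) / 2 < m := by omega
      obtain ⟨t, ht⟩ := ih _ hq
      refine ⟨(decide ((m - 1) % 2 = 1)) :: t, ?_⟩
      simp only [enc, ht]
      have := Nat.div_add_mod (m - 1) 2
      have h2 : (m - 1) % 2 = 0 ∨ (m - 1) % 2 = 1 := by omega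
      rcases h2 with h | h <;> simp [h] <;> omega

private lemma seqProb_mono' {𝒳 : Type*} [Fintype 𝒳] {P : 𝒳 → ℝ} (hP : ∀ x, 0 ≤ P x) {n : ℕ}
    {S T : (Fin n → 𝒳) → Prop} (h : ∀ xs, S xs → T xs) :
    seqProb P n S ≤ seqProb P n T := by
  apply Finset.sum_le_sum
  intro xs _
  by_cases hS : S xs
  · rw [if_pos hS, if_pos (h xs hS)]
  · rw [if_neg hS]
    split
    · exact Finset.prod_nonneg fun i _ => hP _
    · exact le_refl 0

private lemma seqProb_of_false' {𝒳 : Type*} [Fintype 𝒳] (P : 𝒳 → ℝ) {n : ℕ}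
    {S : (Fin n → 𝒳) → Prop} (h : ∀ xs, ¬ S xs) : seqProb P n S = 0 := by
  unfold seqProb
  apply Finset.sum_eq_zero
  intro xs _
  exact if_neg (h xs)

private lemma mul_add_inj' {a q1 q2 r1 r2 : ℕ} (h1 : r1 < a) (h2 : r2 < a)
    (h : a * q1 + r1 = a * q2 + r2) : q1 = q2 ∧ r1 = r2 := by
  have key : ∀ s1 s2 t1 t2 : ℕ, t1 < a → s1 < s2 → a * s1 + t1 < a * s2 + t2 := by
    intro s1 s2 t1 t2 ht hs
    calc a * s1 + t1 < a * s1 + a := by omega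
      _ = a * (s1 + 1) := by ring
      _ ≤ a * s2 := Nat.mul_le_mul_left a hs
      _ ≤ a * s2 + t2 := Nat.le_add_right _ _
  have hq : q1 = q2 := by
    rcases lt_trichotomy q1 q2 with hl | he | hg
    · exact absurd h (by have := key q1 q2 r1 r2 h1 hl; omega)
    · exact he
    · exact absurd h (by have := key q2 q1 r2 r1 h2 hg; omega)
  subst hq
  exact ⟨rfl, by omega⟩

/-- A rate function `R(ε,P)` is n-achievable iff there is an n-achievable guessing
function `M(ε,P)` with `⌊log₂ M(ε,P)⌋ ≤ n·R(ε,P)` for all ε ∈ (0,1) and all P. -/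
theorem stmt0 (𝒳 : Type*) [Fintype 𝒳] (n : ℕ) (hn : 0 < n)
    (R : ℝ → (𝒳 → ℝ) → ℝ) :
    RateAchievable 𝒳 n R ↔
      ∃ M : ℝ → (𝒳 → ℝ) → ℝ, GuessAchievable 𝒳 n M ∧
        ∀ ε ∈ Set.Ioo (0 : ℝ) 1, ∀ P : 𝒳 → ℝ, IsDist P →
          (⌊Real.logb 2 (M ε P)⌋ : ℝ) ≤ n * R ε P := by
  have hn' : (0 : ℝ) < n := by exact_mod_cast hn
  constructor
  · -- Forward direction
    rintro ⟨φ, hφinj, hφR⟩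
    set N' := Fintype.card (Fin n → 𝒳) with hN'
    have hN'eq : N' = Fintype.card 𝒳 ^ n := by
      simp [hN', Fintype.card_fun]
    set e : (Fin n → 𝒳) ≃ Fin N' := Fintype.equivFin _ with he
    set K : (Fin n → 𝒳) → ℕ := fun xs => (N' + 1) * (φ xs).length + (e xs : ℕ) with hK
    have heK : ∀ xs, (e xs : ℕ) < N' + 1 := fun xs => by have := (e xs).isLt; omega
    have hKinj : Function.Injective K := by
      intro x y h
      simp only [hK] at h
      obtain ⟨hq, hr⟩ := mul_add_inj' (heK x) (heK y) h
      exact e.injective (Fin.val_injective hr)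
    have hKmono : ∀ x z : (Fin n → 𝒳), (φ x).length < (φ z).length → K x < K z := by
      intro x z h
      have hx := heK x
      have h1 : (N' + 1) * ((φ x).length + 1) = (N' + 1) * (φ x).length + (N' + 1) := by ring
      calc K x < (N' + 1) * ((φ x).length + 1) := by simp only [hK]; omega
        _ ≤ (N' + 1) * (φ z).length := Nat.mul_le_mul_left _ (by omega)
        _ ≤ K z := by simp only [hK]; omega
    have hKlen : ∀ {x z : (Fin n → 𝒳)}, K x < K z → (φ x).length ≤ (φ z).length := by
      intro x z h
      by_contra hc
      push_neg at hc
      exact absurd (hKmono z x hc) (by omega)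
    set G : (Fin n → 𝒳) → ℕ :=
      fun xs => 1 + (Finset.univ.filter fun z => K z < K xs).card with hG
    have hGinj : Function.Injective G := by
      intro x y h
      by_contra hne
      have hKne : K x ≠ K y := fun hk => hne (hKinj hk)
      have main : ∀ a b : (Fin n → 𝒳), K a < K b →
          (Finset.univ.filter fun z => K z < K a).card <
            (Finset.univ.filter fun z => K z < K b).card := by
        intro a b hab
        apply Finset.card_lt_card
        rw [Finset.ssubset_def]
        constructor
        · intro z hz
          simp only [Finset.mem_filter, Finset.mem_univ, true_and] at hz ⊢
          omega
        · intro hsub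
          have := hsub (show a ∈ Finset.univ.filter fun z => K z < K b by
            simp only [Finset.mem_filter, Finset.mem_univ, true_and]; exact hab)
          simp only [Finset.mem_filter, Finset.mem_univ, true_and] at this
          omega
      simp only [hG] at h
      rcases lt_or_gt_of_ne hKne with hlt | hlt
      · have := main x y hlt; omega
      · have := main y x hlt; omega
    have hGbnd : ∀ xs, 1 ≤ G xs ∧ G xs ≤ Fintype.card 𝒳 ^ n := by
      intro xs
      refine ⟨by simp only [hG]; omega, ?_⟩
      have hsub : (Finset.univ.filter fun z => K z < K xs) ⊆ Finset.univ.erase xs := by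
        intro z hz
        simp only [Finset.mem_filter, Finset.mem_univ, true_and] at hz
        simp only [Finset.mem_erase, Finset.mem_univ, and_true]
        intro hzx
        rw [hzx] at hz
        omega
      have h1 := Finset.card_le_card hsub
      have h2 : (Finset.univ.erase xs).card = N' - 1 := by
        rw [Finset.card_erase_of_mem (Finset.mem_univ xs), Finset.card_univ]
      have h3 : 1 ≤ N' := by
        rw [hN']
        exact Fintype.card_pos_iff.mpr ⟨xs⟩
      rw [← hN'eq]
      simp only [hG]
      omega
    refine ⟨fun ε P => (guessM n G ε P : ℝ),
      ⟨G, hGinj, hGbnd, fun ε hε P hP => le_refl _⟩, ?_⟩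
    intro ε hε P hP
    obtain ⟨hε0, hε1⟩ := hε
    have hksetne : {k : ℕ | seqProb P n (fun xs => k < (φ xs).length) ≤ ε}.Nonempty := by
      refine ⟨Finset.univ.sup fun z => (φ z).length, ?_⟩
      show seqProb P n _ ≤ ε
      rw [seqProb_of_false' P ?_]
      · exact le_of_lt hε0
      · intro xs h
        have hb : (φ xs).length ≤ Finset.univ.sup fun z => (φ z).length :=
          Finset.le_sup (f := fun z => (φ z).length) (Finset.mem_univ xs)
        omega
    set k₀ := sInf {k : ℕ | seqProb P n (fun xs => k < (φ xs).length) ≤ ε} with hk₀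
    have hk₀mem : seqProb P n (fun xs => k₀ < (φ xs).length) ≤ ε := Nat.sInf_mem hksetne
    have hk₀R : (k₀ : ℝ) ≤ n * R ε P := by
      have h1 := hφR ε ⟨hε0, hε1⟩ P hP
      have h2 : epsRate n φ ε P = (k₀ : ℝ) / n := rfl
      rw [h2, div_le_iff₀ hn'] at h1
      linarith
    have hp2 : 2 ≤ 2 ^ (k₀ + 1) := by
      have : (2 : ℕ) ^ 1 ≤ 2 ^ (k₀ + 1) := Nat.pow_le_pow_right (by norm_num) (by omega)
      simpa using this
    have hGle : ∀ xs, (φ xs).length ≤ k₀ → G xs ≤ 2 ^ (k₀ + 1) - 1 := by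
      intro xs hxs
      have hnotmem : xs ∉ Finset.univ.filter fun z => K z < K xs := by
        simp only [Finset.mem_filter, Finset.mem_univ, true_and]
        omega
      have hsub : insert xs (Finset.univ.filter fun z => K z < K xs) ⊆
          Finset.univ.filter fun z => (φ z).length ≤ k₀ := by
        intro z hz
        rcases Finset.mem_insert.mp hz with rfl | hz
        · simp only [Finset.mem_filter, Finset.mem_univ, true_and]
          exact hxs
        · simp only [Finset.mem_filter, Finset.mem_univ, true_and] at hz ⊢
          exact le_trans (hKlen hz) hxs
      have h1 := Finset.card_le_card hsub
      rw [Finset.card_insert_of_notMem hnotmem] at h1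
      have h2 : (Finset.univ.filter fun z => (φ z).length ≤ k₀).card ≤
          (Finset.range (2 ^ (k₀ + 1) - 1)).card := by
        apply Finset.card_le_card_of_injOn (fun z => enc (φ z))
        · intro z hz
          simp only [Finset.coe_filter, Finset.mem_univ, true_and, Set.mem_setOf_eq] at hz
          simp only [Finset.coe_range, Set.mem_Iio]
          have h3 := enc_add_two (φ z)
          have h4 : 2 ^ ((φ z).length + 1) ≤ 2 ^ (k₀ + 1) :=
            Nat.pow_le_pow_right (by norm_num) (by omega)
          omega
        · intro a _ b _ hab
          exact hφinj (enc_injective hab)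
      rw [Finset.card_range] at h2
      simp only [hG]
      omega
    have hmmem : 2 ^ (k₀ + 1) - 1 ∈
        {m : ℕ | 1 ≤ m ∧ seqProb P n (fun xs => m < G xs) ≤ ε} := by
      constructor
      · omega
      · refine le_trans (seqProb_mono' hP.1 ?_) hk₀mem
        intro xs h
        by_contra hc
        push_neg at hc
        have := hGle xs hc
        omega
    set m₀ := guessM n G ε P with hm₀def
    have hm₀le : m₀ ≤ 2 ^ (k₀ + 1) - 1 := Nat.sInf_le hmmem
    have hm₀1 : 1 ≤ m₀ := (Nat.sInf_mem (⟨_, hmmem⟩ : Set.Nonempty _)).1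
    have hlt : (m₀ : ℝ) < (2 : ℝ) ^ (k₀ + 1) := by
      have : m₀ < 2 ^ (k₀ + 1) := by omega
      exact_mod_cast this
    have h2eq : Real.logb 2 ((2 : ℝ) ^ (k₀ + 1)) = (k₀ : ℝ) + 1 := by
      rw [Real.logb_pow, Real.logb_self_eq_one (by norm_num)]
      push_cast
      ring
    have hlogb : Real.logb 2 (m₀ : ℝ) < (k₀ : ℝ) + 1 := by
      have h1 : Real.logb 2 (m₀ : ℝ) < Real.logb 2 ((2 : ℝ) ^ (k₀ + 1)) :=
        Real.logb_lt_logb (by norm_num) (by exact_mod_cast hm₀1) hlt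
      rwa [h2eq] at h1
    have hfloor : ⌊Real.logb 2 (m₀ : ℝ)⌋ ≤ (k₀ : ℤ) := by
      have : ⌊Real.logb 2 (m₀ : ℝ)⌋ < (k₀ : ℤ) + 1 := by
        rw [Int.floor_lt]
        push_cast
        linarith
      omega
    calc (⌊Real.logb 2 (m₀ : ℝ)⌋ : ℝ) ≤ (k₀ : ℝ) := by exact_mod_cast hfloor
      _ ≤ n * R ε P := hk₀R
  · -- Reverse direction
    rintro ⟨M, ⟨G, hGinj, hGbnd, hGM⟩, hMfloor⟩
    set φ : (Fin n → 𝒳) → List Bool :=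
      fun xs => Function.invFun enc (G xs - 1) with hφ
    have hencφ : ∀ xs, enc (φ xs) = G xs - 1 := by
      intro xs
      exact Function.rightInverse_invFun enc_surjective (G xs - 1)
    have hφinj : Function.Injective φ := by
      intro x y hxy
      apply hGinj
      have h1 := congrArg enc hxy
      rw [hencφ, hencφ] at h1
      have hx := (hGbnd x).1
      have hy := (hGbnd y).1
      omega
    refine ⟨φ, hφinj, ?_⟩
    intro ε hε P hP
    obtain ⟨hε0, hε1⟩ := hε
    have hX : Nonempty 𝒳 := by
      by_contra h
      rw [not_nonempty_iff] at h
      have h2 := hP.2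
      rw [Finset.univ_eq_empty, Finset.sum_empty] at h2
      norm_num at h2
    have hmem0 : Fintype.card 𝒳 ^ n ∈
        {m : ℕ | 1 ≤ m ∧ seqProb P n (fun xs => m < G xs) ≤ ε} := by
      constructor
      · exact Nat.one_le_pow _ _ Fintype.card_pos
      · rw [seqProb_of_false' P ?_]
        · exact le_of_lt hε0
        · intro xs h
          exact absurd (hGbnd xs).2 (by omega)
    set m₀ := guessM n G ε P with hm₀def
    have hm₀mem := Nat.sInf_mem (⟨_, hmem0⟩ :
      {m : ℕ | 1 ≤ m ∧ seqProb P n (fun xs => m < G xs) ≤ ε}.Nonempty)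
    have hm₀1 : 1 ≤ m₀ := hm₀mem.1
    have hm₀M : (m₀ : ℝ) ≤ M ε P := hGM ε ⟨hε0, hε1⟩ P hP
    set k := Nat.log 2 m₀ with hkdef
    have himp : ∀ xs, k < (φ xs).length → m₀ < G xs := by
      intro xs hlen
      have h1 := le_enc (φ xs)
      rw [hencφ] at h1
      have h2 : 2 ^ (k + 1) ≤ 2 ^ (φ xs).length :=
        Nat.pow_le_pow_right (by norm_num) (by omega)
      have h3 : m₀ < 2 ^ (k + 1) := Nat.lt_pow_succ_log_self (by norm_num) m₀
      have h4 := (hGbnd xs).1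
      omega
    have hkmem : k ∈ {k : ℕ | seqProb P n (fun xs => k < (φ xs).length) ≤ ε} :=
      le_trans (seqProb_mono' hP.1 himp) hm₀mem.2
    have hInfk : sInf {k : ℕ | seqProb P n (fun xs => k < (φ xs).length) ≤ ε} ≤ k :=
      Nat.sInf_le hkmem
    have hklogb : (k : ℝ) ≤ Real.logb 2 (M ε P) := by
      have h1 : (2 : ℝ) ^ k ≤ (m₀ : ℝ) := by
        exact_mod_cast Nat.pow_log_le_self 2 (by omega : m₀ ≠ 0)
      have hm₀pos : (0 : ℝ) < (m₀ : ℝ) := by exact_mod_cast hm₀1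
      have h2 : Real.logb 2 ((2 : ℝ) ^ k) ≤ Real.logb 2 (m₀ : ℝ) :=
        Real.logb_le_logb_of_le (by norm_num) (by positivity) h1
      have h3 : Real.logb 2 (m₀ : ℝ) ≤ Real.logb 2 (M ε P) :=
        Real.logb_le_logb_of_le (by norm_num) hm₀pos hm₀M
      have h4 : Real.logb 2 ((2 : ℝ) ^ k) = (k : ℝ) := by
        rw [Real.logb_pow, Real.logb_self_eq_one (by norm_num)]
        ring
      linarith
    have hfl : (k : ℤ) ≤ ⌊Real.logb 2 (M ε P)⌋ := Int.le_floor.mpr (by exact_mod_cast hklogb)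
    have hkR : (k : ℝ) ≤ n * R ε P := by
      have h5 := hMfloor ε ⟨hε0, hε1⟩ P hP
      calc (k : ℝ) ≤ (⌊Real.logb 2 (M ε P)⌋ : ℝ) := by exact_mod_cast hfl
        _ ≤ n * R ε P := h5
    have heq : epsRate n φ ε P =
        ((sInf {k : ℕ | seqProb P n (fun xs => k < (φ xs).length) ≤ ε} : ℕ) : ℝ) / n := rfl
    rw [heq, div_le_iff₀ hn']
    calc ((sInf {k : ℕ | seqProb P n (fun xs => k < (φ xs).length) ≤ ε} : ℕ) : ℝ)
        ≤ (k : ℝ) := by exact_mod_cast hInfk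
      _ ≤ n * R ε P := hkR
      _ = R ε P * n := by ring
end

section
/- Suppose |𝒳|=2. For every positive integer n there exists a single n-length fixed-to-variable code φ such that for every ε∈(0,1) and every distribution P on 𝒳, n·R(φ;ε,P) ≤ n·R*(n,ε,P) + 1, where R*(n,ε,P) = min over all n-length fixed-to-variable codes ψ of R(ψ;ε,P) is the optimal ε-rate when the distribution P is known. -/
open scoped BigOperators
open Classical

namespace Stmt1Aux
open Finset

/-- binary value of a bit list with a leading 1 prepended (injective). -/
def num : List Bool → ℕ
  | [] => 1
  | b :: t => 2 * num t + cond b 1 0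

lemma num_pos (l : List Bool) : 1 ≤ num l := by
  induction l with
  | nil => simp [num]
  | cons b t ih => cases b <;> simp [num] <;> omega

lemma num_lt (l : List Bool) : num l < 2 ^ (l.length + 1) := by
  induction l with
  | nil => simp [num]
  | cons b t ih =>
      have : (2:ℕ) ^ (t.length + 1 + 1) = 2 * 2 ^ (t.length + 1) := by ring
      cases b <;> simp [num] <;> omega

lemma num_inj : Function.Injective num := by
  intro l1 l2 h
  induction l1 generalizing l2 with
  | nil =>
      cases l2 with
      | nil => rfl
      | cons b t => have := num_pos t; cases b <;> simp [num] at h <;> omega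
  | cons b t ih =>
      cases l2 with
      | nil => have := num_pos t; cases b <;> simp [num] at h <;> omega
      | cons b' t' =>
          have ht : num t = num t' ∧ b = b' := by
            cases b <;> cases b' <;> simp [num] at h ⊢ <;> omega
          rw [ht.2, ih ht.1]

/-- codeword for rank `r`: the bits of `r+1` below its leading bit. -/
noncomputable def enc (r : ℕ) : List Bool :=
  (List.range (Nat.log2 (r + 1))).map (fun i => (r + 1).testBit i)

lemma length_enc (r : ℕ) : (enc r).length = Nat.log2 (r + 1) := by
  simp [enc]

lemma testBit_log2 {m : ℕ} (hm : m ≠ 0) : m.testBit (Nat.log2 m) = true := by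
  have h1 : 2 ^ Nat.log2 m ≤ m := Nat.log2_self_le hm
  have h2 : m < 2 ^ (Nat.log2 m + 1) := Nat.lt_log2_self
  have hp : 0 < 2 ^ Nat.log2 m := by positivity
  have hdiv : m / 2 ^ Nat.log2 m = 1 := by
    have lo : 1 ≤ m / 2 ^ Nat.log2 m := (Nat.le_div_iff_mul_le hp).2 (by omega)
    have hi : m / 2 ^ Nat.log2 m < 2 := (Nat.div_lt_iff_lt_mul hp).2 (by
      rw [pow_succ] at h2; omega)
    omega
  rw [Nat.testBit_eq_decide_div_mod_eq, hdiv]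
  decide

lemma testBit_false_of_log2_lt {m i : ℕ} (h : Nat.log2 m < i) : m.testBit i = false := by
  rcases Nat.eq_zero_or_pos m with hm | hm
  · simp [hm]
  · apply Nat.testBit_lt_two_pow
    calc m < 2 ^ (Nat.log2 m + 1) := Nat.lt_log2_self
    _ ≤ 2 ^ i := Nat.pow_le_pow_right (by norm_num) (by omega)

lemma enc_inj : Function.Injective enc := by
  intro r1 r2 h
  have hlen : Nat.log2 (r1 + 1) = Nat.log2 (r2 + 1) := by
    have := congrArg List.length h
    simpa [length_enc] using this
  set L := Nat.log2 (r1 + 1) with hL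
  have hbits : ∀ i < L, (r1 + 1).testBit i = (r2 + 1).testBit i := by
    intro i hi
    have h1 : (enc r1)[i]? = (enc r2)[i]? := by rw [h]
    simp [enc, hi, ← hL, ← hlen] at h1
    exact h1
  have : r1 + 1 = r2 + 1 := by
    apply Nat.eq_of_testBit_eq
    intro i
    rcases lt_trichotomy i L with hi | hi | hi
    · exact hbits i hi
    · subst hi
      have e1 : (r1 + 1).testBit L = true := by rw [hL]; exact testBit_log2 (by omega)
      have e2 : (r2 + 1).testBit L = true := by rw [hlen]; exact testBit_log2 (by omega)
      rw [e1, e2]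
    · rw [testBit_false_of_log2_lt (by omega), testBit_false_of_log2_lt (by omega : Nat.log2 (r2+1) < i)]
  omega


variable {α : Type*} [Fintype α]

/-- rank of `x` in the order induced by an injective key `k`. -/
noncomputable def rnk (k : α → ℕ) (x : α) : ℕ :=
  (univ.filter fun y => k y < k x).card

variable {k : α → ℕ}

lemma rnk_lt_rnk (hk : Function.Injective k) {x y : α} (h : k x < k y) :
    rnk k x < rnk k y := by
  apply card_lt_card
  constructor
  · intro z hz
    simp only [mem_filter, mem_univ, true_and] at hz ⊢
    omega
  · intro hsub
    have hx : x ∈ univ.filter fun z => k z < k y := by simp [h]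
    have := hsub hx
    simp at this

lemma rnk_le_rnk {x y : α} (h : k x ≤ k y) : rnk k x ≤ rnk k y := by
  apply card_le_card
  intro z hz
  simp only [mem_filter, mem_univ, true_and] at hz ⊢
  omega

lemma rnk_inj (hk : Function.Injective k) : Function.Injective (rnk k) := by
  intro x y h
  by_contra hne
  rcases lt_trichotomy (k x) (k y) with hc | hc | hc
  · have := rnk_lt_rnk hk hc; omega
  · exact hne (hk hc)
  · have := rnk_lt_rnk hk hc; omega

lemma rnk_succ (hk : Function.Injective k) {x y : α} (h : k y = k x + 1) :
    rnk k y = rnk k x + 1 := by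
  have hset : (univ.filter fun z => k z < k y) = insert x (univ.filter fun z => k z < k x) := by
    ext z
    simp only [mem_filter, mem_univ, true_and, mem_insert, h]
    constructor
    · intro hz
      rcases Nat.lt_or_ge (k z) (k x) with h1 | h1
      · exact Or.inr h1
      · exact Or.inl (hk (by omega))
    · rintro (rfl | hz) <;> omega
  rw [rnk, hset, card_insert_of_notMem (by simp)]
  rfl

lemma rnk_lt_card (x : α) : rnk k x < Fintype.card α := by
  have : (univ.filter fun y => k y < k x) ⊂ univ := by
    rw [Finset.ssubset_univ_iff]
    intro hcontra
    have : x ∈ univ.filter fun y => k y < k x := by rw [hcontra]; exact mem_univ x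
    simp at this
  simpa [rnk] using card_lt_card this

lemma image_rnk (hk : Function.Injective k) :
    univ.image (rnk k) = range (Fintype.card α) := by
  apply Finset.eq_of_subset_of_card_le
  · intro a ha
    simp only [mem_image, mem_univ, true_and] at ha
    rcases ha with ⟨x, rfl⟩
    simpa using rnk_lt_card x
  · rw [card_range, card_image_of_injective _ (rnk_inj hk), card_univ]

lemma card_rnk_lt (hk : Function.Injective k) (c : ℕ) :
    (univ.filter fun x => rnk k x < c).card = min c (Fintype.card α) := by
  have h1 : (univ.filter fun x => rnk k x < c).image (rnk k)
      = (univ.image (rnk k)).filter (fun a => a < c) := by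
    ext a
    simp only [mem_image, mem_filter, mem_univ, true_and]
    constructor
    · rintro ⟨x, hx, rfl⟩; exact ⟨⟨x, rfl⟩, hx⟩
    · rintro ⟨⟨x, rfl⟩, hx⟩; exact ⟨x, hx, rfl⟩
  have h2 : (univ.image (rnk k)).filter (fun a => a < c) = range (min (Fintype.card α) c) := by
    rw [image_rnk hk]
    ext a
    simp only [mem_filter, mem_range, lt_min_iff]
  calc (univ.filter fun x => rnk k x < c).card
      = ((univ.filter fun x => rnk k x < c).image (rnk k)).card :=
        (card_image_of_injective _ (rnk_inj hk)).symm
    _ = min c (Fintype.card α) := by rw [h1, h2, card_range, Nat.min_comm]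

/-- a k-down-closed set of card ≥ c contains the first c elements. -/
lemma subset_of_downclosed_card_ge (hk : Function.Injective k) {D : Finset α}
    (hD : ∀ x ∈ D, ∀ y, k y < k x → y ∈ D) {c : ℕ} (hc : c ≤ D.card) :
    (univ.filter fun x => rnk k x < c) ⊆ D := by
  intro x hx
  simp only [mem_filter, mem_univ, true_and] at hx
  by_contra hxD
  have hsub : D ⊆ univ.filter fun y => k y < k x := by
    intro y hy
    simp only [mem_filter, mem_univ, true_and]
    rcases Nat.lt_trichotomy (k y) (k x) with h | h | h
    · exact h
    · exact absurd (hk h ▸ hy) hxD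
    · exact absurd (hD y hy x h) hxD
  have := card_le_card hsub
  have : D.card ≤ rnk k x := this
  omega

/-- a k-down-closed set of card ≤ c is contained in the first c elements. -/
lemma downclosed_subset (hk : Function.Injective k) {D : Finset α}
    (hD : ∀ x ∈ D, ∀ y, k y < k x → y ∈ D) {c : ℕ} (hc : D.card ≤ c) :
    D ⊆ univ.filter fun x => rnk k x < c := by
  intro x hx
  simp only [mem_filter, mem_univ, true_and]
  have hsub : (univ.filter fun y => k y < k x) ⊆ D.erase x := by
    intro y hy
    simp only [mem_filter, mem_univ, true_and] at hy
    rw [mem_erase]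
    refine ⟨?_, hD x hx y hy⟩
    intro he
    rw [he] at hy
    omega
  have h1 := card_le_card hsub
  have h2 : (D.erase x).card = D.card - 1 := card_erase_of_mem hx
  have h3 : 1 ≤ D.card := card_pos.2 ⟨x, hx⟩
  have : rnk k x ≤ D.card - 1 := h2 ▸ h1
  omega

section KL
variable {α : Type*} [Fintype α]

lemma KL (k u : α → ℕ) (n : ℕ) (flip : α → α) (m : ℕ)
    (hk : Function.Injective k)
    (huflip : ∀ s, u (flip s) = n - u s)
    (hun : ∀ s, u s ≤ n)
    (hflipflip : ∀ s, flip (flip s) = s)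
    (hpair : ∀ s, rnk k s < 2 * m → 2 * u s ≠ n → rnk k (flip s) < 2 * m)
    (hκk : ∀ s t, k s ≤ k t → min (u s) (n - u s) ≤ min (u t) (n - u t))
    (E : Finset α) (hE : ∀ a ∈ E, ∀ b, u a ≤ u b → b ∈ E) :
    min m E.card ≤ ((univ.filter fun s => rnk k s < 2 * m) ∩ E).card := by
  set U := univ.filter (fun s => rnk k s < 2 * m) with hU
  have hUcard : U.card = min (2 * m) (Fintype.card α) := card_rnk_lt hk _
  have hmemU : ∀ s, s ∈ U ↔ rnk k s < 2 * m := by intro s; simp [hU]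
  have hflipinj : ∀ (s : Finset α), Set.InjOn flip ↑s := by
    intro s a _ b _ hab
    have := congrArg flip hab
    rwa [hflipflip, hflipflip] at this
  by_cases hbig : Fintype.card α ≤ 2 * m
  · have : U = univ := by
      apply eq_univ_of_card
      rw [hUcard]; omega
    rw [this, univ_inter]
    exact min_le_right _ _
  · push_neg at hbig
    have hU2m : U.card = 2 * m := by rw [hUcard]; omega
    by_cases hA : ∃ s0 ∈ E, 2 * u s0 ≤ n
    · rcases hA with ⟨s0, hs0E, hs0⟩
      have hinj : (U \ E).card ≤ (U ∩ E).card := by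
        apply card_le_card_of_injOn flip _ (hflipinj _)
        intro s hs
        rw [mem_coe, mem_sdiff] at hs
        rcases hs with ⟨hsU, hsE⟩
        have husn : 2 * u s < n := by
          by_contra hge
          push_neg at hge
          exact hsE (hE s0 hs0E s (by omega))
        have h1 : rnk k (flip s) < 2 * m :=
          hpair s ((hmemU s).1 hsU) (by omega)
        have h2 : flip s ∈ E := hE s0 hs0E (flip s) (by rw [huflip]; omega)
        rw [mem_coe, mem_inter, hmemU]
        exact ⟨h1, h2⟩
      have hsplit : (U ∩ E).card + (U \ E).card = U.card := card_inter_add_card_sdiff U E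
      have hm : m ≤ (U ∩ E).card := by omega
      exact le_trans (min_le_left _ _) hm
    · push_neg at hA
      set D := E ∪ E.image flip with hD
      have hκD : ∀ x ∈ D, ∃ a ∈ E, min (u x) (n - u x) = n - u a := by
        intro x hx
        rw [hD, mem_union] at hx
        rcases hx with hx | hx
        · refine ⟨x, hx, ?_⟩
          have h1 := hA x hx
          have h2 := hun x
          omega
        · rw [mem_image] at hx
          rcases hx with ⟨a, ha, rfl⟩
          refine ⟨a, ha, ?_⟩
          have h1 := hA a ha
          have h2 := hun a
          rw [huflip]
          omega
      have hDup : ∀ x ∈ D, ∀ y, min (u y) (n - u y) ≤ min (u x) (n - u x) → y ∈ D := by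
        intro x hx y hy
        rcases hκD x hx with ⟨a, ha, hax⟩
        rw [hax] at hy
        by_cases hyy : n - u y ≤ u y
        · have hay : u a ≤ u y := by
            have h1 := hun y; have h2 := hun a; have h3 := hA a ha
            omega
          exact mem_union_left _ (hE a ha y hay)
        · push_neg at hyy
          have hay : u a ≤ u (flip y) := by
            rw [huflip]
            have h1 := hun y; have h2 := hun a; have h3 := hA a ha
            omega
          have hz : flip y ∈ E := hE a ha _ hay
          apply mem_union_right
          rw [mem_image]
          exact ⟨flip y, hz, hflipflip y⟩
      have hDdown : ∀ x ∈ D, ∀ y, k y < k x → y ∈ D :=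
        fun x hx y hy => hDup x hx y (hκk y x (le_of_lt hy))
      by_cases hsz : 2 * m ≤ D.card
      · have hUD : U ⊆ D := subset_of_downclosed_card_ge hk hDdown hsz
        have hinj : (U \ E).card ≤ (U ∩ E).card := by
          apply card_le_card_of_injOn flip _ (hflipinj _)
          intro s hs
          rw [mem_coe, mem_sdiff] at hs
          rcases hs with ⟨hsU, hsE⟩
          have hsD := hUD hsU
          rw [hD, mem_union] at hsD
          rcases hsD with h | h
          · exact absurd h hsE
          · rw [mem_image] at h
            rcases h with ⟨a, ha, rfl⟩
            have hfE : flip (flip a) ∈ E := by rw [hflipflip]; exact ha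
            have hnm : 2 * u (flip a) ≠ n := by
              rw [huflip]
              have h1 := hA a ha; have h2 := hun a
              omega
            have h1 : rnk k (flip (flip a)) < 2 * m := hpair _ ((hmemU _).1 hsU) hnm
            rw [mem_coe, mem_inter, hmemU]
            exact ⟨h1, hfE⟩
        have hsplit : (U ∩ E).card + (U \ E).card = U.card := card_inter_add_card_sdiff U E
        have hm : m ≤ (U ∩ E).card := by omega
        exact le_trans (min_le_left _ _) hm
      · push_neg at hsz
        have hED : E ⊆ D := by rw [hD]; exact subset_union_left
        have hEU : E ⊆ U := fun x hx => downclosed_subset hk hDdown (le_of_lt hsz) (hED hx)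
        have heq : U ∩ E = E := inter_eq_right.2 hEU
        rw [heq]
        exact min_le_right _ _

lemma master (k u : α → ℕ) (n : ℕ) (flip : α → α) (m : ℕ)
    (hk : Function.Injective k)
    (huflip : ∀ s, u (flip s) = n - u s)
    (hun : ∀ s, u s ≤ n)
    (hflipflip : ∀ s, flip (flip s) = s)
    (hpair : ∀ s, rnk k s < 2 * m → 2 * u s ≠ n → rnk k (flip s) < 2 * m)
    (hκk : ∀ s t, k s ≤ k t → min (u s) (n - u s) ≤ min (u t) (n - u t))
    (q : α → ℝ) (hq0 : ∀ s, 0 ≤ q s)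
    (hqu : ∀ s t, u s ≤ u t → q s ≤ q t)
    (A : Finset α) (hA : A.card ≤ m) :
    ∑ s ∈ A, q s ≤ ∑ s ∈ univ.filter (fun s => rnk k s < 2 * m), q s := by
  set U := univ.filter (fun s => rnk k s < 2 * m) with hU
  have hHall : ∃ f : {x // x ∈ A} → α, Function.Injective f ∧
      ∀ a : {x // x ∈ A}, f a ∈ U.filter (fun t => q a.1 ≤ q t) := by
    rw [← Finset.all_card_le_biUnion_card_iff_exists_injective]
    intro s
    rcases s.eq_empty_or_nonempty with rfl | hne
    · simp
    · rcases exists_min_image s (fun a => q a.1) hne with ⟨a0, ha0s, hmin⟩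
      set E := univ.filter (fun t => q a0.1 ≤ q t) with hEdef
      have hEup : ∀ a ∈ E, ∀ b, u a ≤ u b → b ∈ E := by
        intro a ha b hb
        rw [hEdef, mem_filter] at ha ⊢
        exact ⟨mem_univ _, le_trans ha.2 (hqu a b hb)⟩
      have hKL := KL k u n flip m hk huflip hun hflipflip hpair hκk E hEup
      have h1 : s.card ≤ m := by
        calc s.card ≤ Fintype.card {x // x ∈ A} := card_le_univ s
        _ = A.card := Fintype.card_coe A
        _ ≤ m := hA
      have h2 : s.card ≤ E.card := by
        apply card_le_card_of_injOn (fun a => a.1)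
        · intro a ha
          simp only [mem_coe, hEdef, mem_filter]
          exact ⟨mem_univ _, hmin a ha⟩
        · intro a _ b _ hab
          exact Subtype.ext hab
      have hUEeq : U.filter (fun t => q a0.1 ≤ q t) = U ∩ E := by
        ext t
        simp only [mem_filter, mem_inter, hEdef, mem_univ, true_and]
      have hsub : (U.filter fun t => q a0.1 ≤ q t) ⊆
          s.biUnion (fun a => U.filter (fun t => q a.1 ≤ q t)) :=
        subset_biUnion_of_mem (fun a => U.filter (fun t => q a.1 ≤ q t)) ha0s
      calc s.card ≤ min m E.card := le_min h1 h2
      _ ≤ (U ∩ E).card := hKL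
      _ = (U.filter fun t => q a0.1 ≤ q t).card := by rw [hUEeq]
      _ ≤ _ := card_le_card hsub
  rcases hHall with ⟨f, hfinj, hf⟩
  have step1 : ∑ s ∈ A, q s = ∑ a : {x // x ∈ A}, q a.1 := by
    rw [← Finset.sum_attach A q]
    rfl
  have step2 : ∑ a : {x // x ∈ A}, q a.1 ≤ ∑ a : {x // x ∈ A}, q (f a) := by
    apply Finset.sum_le_sum
    intro a _
    have := hf a
    rw [mem_filter] at this
    exact this.2
  have step3 : ∑ a : {x // x ∈ A}, q (f a) = ∑ t ∈ univ.image f, q t := by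
    rw [Finset.sum_image (fun x _ y _ h => hfinj h)]
  have step4 : ∑ t ∈ univ.image f, q t ≤ ∑ t ∈ U, q t := by
    apply sum_le_sum_of_subset_of_nonneg
    · intro t ht
      rw [mem_image] at ht
      rcases ht with ⟨a, _, rfl⟩
      have := hf a
      rw [mem_filter] at this
      exact this.1
    · intro i _ _
      exact hq0 i
  calc ∑ s ∈ A, q s = ∑ a : {x // x ∈ A}, q a.1 := step1
  _ ≤ ∑ a : {x // x ∈ A}, q (f a) := step2
  _ = ∑ t ∈ univ.image f, q t := step3
  _ ≤ ∑ t ∈ U, q t := step4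

end KL
lemma mulladd_lt {Bb m1 m2 p1 p2 : ℕ} (h1 : p1 < Bb) (hm : m1 < m2) :
    m1 * Bb + p1 < m2 * Bb + p2 := by
  have h2 : m1 * Bb + p1 < (m1 + 1) * Bb := by
    rw [add_mul, one_mul]
    exact Nat.add_lt_add_left h1 _
  have h3 : (m1 + 1) * Bb ≤ m2 * Bb := Nat.mul_le_mul_right _ (by omega)
  omega

lemma mulladd_inj {Bb m1 m2 p1 p2 : ℕ} (h1 : p1 < Bb) (h2 : p2 < Bb)
    (h : m1 * Bb + p1 = m2 * Bb + p2) : m1 = m2 ∧ p1 = p2 := by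
  have hm : m1 = m2 := by
    by_contra hne
    rcases Nat.lt_or_ge m1 m2 with hc | hc
    · have := mulladd_lt (Bb := Bb) (p2 := p2) h1 hc; omega
    · have hc' : m2 < m1 := by omega
      have := mulladd_lt (Bb := Bb) (p2 := p1) h2 hc'; omega
  subst hm
  exact ⟨rfl, by omega⟩

lemma pow_prod_mono {a b : ℝ} (ha : 0 ≤ a) (hab : a ≤ b) {u u' nn : ℕ}
    (h1 : u ≤ u') (h2 : u' ≤ nn) :
    b ^ u * a ^ (nn - u) ≤ b ^ u' * a ^ (nn - u') := by
  have hb : 0 ≤ b := le_trans ha hab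
  have hsplit : nn - u = (u' - u) + (nn - u') := by omega
  have hsplit2 : u' = u + (u' - u) := by omega
  calc b ^ u * a ^ (nn - u) = b ^ u * (a ^ (u' - u) * a ^ (nn - u')) := by
        rw [hsplit, pow_add]
    _ ≤ b ^ u * (b ^ (u' - u) * a ^ (nn - u')) := by
        apply mul_le_mul_of_nonneg_left _ (pow_nonneg hb u)
        apply mul_le_mul_of_nonneg_right _ (pow_nonneg ha _)
        exact pow_le_pow_left₀ ha hab _
    _ = b ^ u' * a ^ (nn - u') := by
        have h3 : u + (u' - u) = u' := by omega
        rw [← mul_assoc, ← pow_add, h3]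

section Main
variable {𝒳 : Type*} [Fintype 𝒳] (e : 𝒳 ≃ Fin 2) (n : ℕ)

def negx : 𝒳 → 𝒳 := fun x => e.symm (e x + 1)

lemma negx_negx (x : 𝒳) : negx e (negx e x) = x := by
  have h2 : ∀ j : Fin 2, j + 1 + 1 = j := by decide
  simp only [negx, Equiv.apply_symm_apply]
  rw [h2]
  exact e.symm_apply_apply x

def flipf : (Fin n → 𝒳) → (Fin n → 𝒳) := fun s i => negx e (s i)

lemma flipf_flipf (s : Fin n → 𝒳) : flipf e n (flipf e n s) = s :=
  funext fun i => negx_negx e (s i)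

noncomputable def wgt : (Fin n → 𝒳) → ℕ :=
  fun s => (univ.filter fun i => e (s i) = 1).card

lemma wgt_le (s : Fin n → 𝒳) : wgt e n s ≤ n :=
  le_trans (card_filter_le _ _) (by simp)

lemma card_filter_not_wgt (s : Fin n → 𝒳) :
    (univ.filter fun i => ¬ e (s i) = 1).card = n - wgt e n s := by
  have h := Finset.card_filter_add_card_filter_not
    (s := (univ : Finset (Fin n))) (p := fun i => e (s i) = 1)
  have hc : (univ : Finset (Fin n)).card = n := by simp
  have hw := wgt_le e n s
  unfold wgt at *
  omega

lemma wgt_flipf (s : Fin n → 𝒳) : wgt e n (flipf e n s) = n - wgt e n s := by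
  have hj : ∀ j : Fin 2, j + 1 = 1 ↔ ¬ j = 1 := by decide
  have hset : (univ.filter fun i => e (flipf e n s i) = 1)
      = (univ.filter fun i => ¬ e (s i) = 1) := by
    apply filter_congr
    intro i _
    simp only [flipf, negx, Equiv.apply_symm_apply]
    exact hj _
  unfold wgt
  rw [hset]
  exact card_filter_not_wgt e n s

noncomputable def idx : (Fin n → 𝒳) → ℕ :=
  fun s => (Fintype.equivFin (Fin n → 𝒳) s : ℕ)

lemma idx_inj : Function.Injective (idx (𝒳 := 𝒳) n) := by
  intro s t h
  exact (Fintype.equivFin (Fin n → 𝒳)).injective (Fin.val_injective h)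

lemma idx_lt (s : Fin n → 𝒳) : idx n s < Fintype.card (Fin n → 𝒳) :=
  (Fintype.equivFin (Fin n → 𝒳) s).isLt

noncomputable def posf : (Fin n → 𝒳) → ℕ := fun s =>
  if n - wgt e n s ≤ wgt e n s then 2 * idx n s else 2 * idx n (flipf e n s) + 1

noncomputable def keyf : (Fin n → 𝒳) → ℕ := fun s =>
  min (wgt e n s) (n - wgt e n s) * (2 * (Fintype.card (Fin n → 𝒳) + 1)) + posf e n s

lemma posf_lt (s : Fin n → 𝒳) : posf e n s < 2 * (Fintype.card (Fin n → 𝒳) + 1) := by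
  have h1 := idx_lt n s
  have h2 := idx_lt n (flipf e n s)
  unfold posf
  split <;> omega

lemma keyf_inj : Function.Injective (keyf e n) := by
  intro s t h
  unfold keyf at h
  obtain ⟨hmin, hpos⟩ := mulladd_inj (posf_lt e n s) (posf_lt e n t) h
  unfold posf at hpos
  by_cases hs : n - wgt e n s ≤ wgt e n s <;> by_cases ht : n - wgt e n t ≤ wgt e n t
  · rw [if_pos hs, if_pos ht] at hpos
    exact idx_inj n (by omega)
  · rw [if_pos hs, if_neg ht] at hpos; omega
  · rw [if_neg hs, if_pos ht] at hpos; omega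
  · rw [if_neg hs, if_neg ht] at hpos
    have := idx_inj n (show idx n (flipf e n s) = idx n (flipf e n t) by omega)
    have h2 := congrArg (flipf e n) this
    rwa [flipf_flipf, flipf_flipf] at h2

lemma min_le_of_keyf_le {s t : Fin n → 𝒳} (h : keyf e n s ≤ keyf e n t) :
    min (wgt e n s) (n - wgt e n s) ≤ min (wgt e n t) (n - wgt e n t) := by
  by_contra hc
  push_neg at hc
  have := mulladd_lt (p2 := posf e n s) (posf_lt e n t) hc
  unfold keyf at h
  omega

lemma keyf_even_of_high {s : Fin n → 𝒳} (hs : n - wgt e n s ≤ wgt e n s) :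
    ∃ c, keyf e n s = 2 * c := by
  refine ⟨min (wgt e n s) (n - wgt e n s) * (Fintype.card (Fin n → 𝒳) + 1) + idx n s, ?_⟩
  unfold keyf posf
  rw [if_pos hs]
  ring

lemma keyf_low_succ {s : Fin n → 𝒳} (hs : wgt e n s < n - wgt e n s) :
    keyf e n s = keyf e n (flipf e n s) + 1 := by
  have hw := wgt_flipf e n s
  have hle := wgt_le e n s
  have hhi : n - wgt e n (flipf e n s) ≤ wgt e n (flipf e n s) := by omega
  have hmin : min (wgt e n (flipf e n s)) (n - wgt e n (flipf e n s))
      = min (wgt e n s) (n - wgt e n s) := by omega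
  unfold keyf posf
  rw [if_neg (by omega), if_pos hhi, hmin]
  omega

end Main
section Main2
variable {𝒳 : Type*} [Fintype 𝒳] (e : 𝒳 ≃ Fin 2) (n : ℕ)

lemma rnk_even_of_strict_high {s : Fin n → 𝒳} (hs : n - wgt e n s < wgt e n s) :
    ∃ c, rnk (keyf e n) s = 2 * c := by
  set S := univ.filter (fun t => keyf e n t < keyf e n s) with hS
  have hnonmid : ∀ t ∈ S, 2 * wgt e n t ≠ n := by
    intro t ht
    rw [hS, mem_filter] at ht
    have hκ := min_le_of_keyf_le e n (le_of_lt ht.2)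
    have h1 := wgt_le e n s
    have h2 := wgt_le e n t
    omega
  set Slow := S.filter (fun t => wgt e n t < n - wgt e n t) with hSlow
  set Shigh := S.filter (fun t => n - wgt e n t < wgt e n t) with hShigh
  have hsplitc : Slow.card + Shigh.card = S.card := by
    have h := Finset.card_filter_add_card_filter_not (s := S)
      (p := fun t => wgt e n t < n - wgt e n t)
    have heq : S.filter (fun t => ¬ wgt e n t < n - wgt e n t) = Shigh := by
      rw [hShigh]
      apply filter_congr
      intro t htS
      have hnm := hnonmid t htS
      have hwl := wgt_le e n t
      omega
    rw [heq] at h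
    exact h
  have hcards : Slow.card = Shigh.card := by
    apply card_nbij (flipf e n)
    · intro t ht
      rw [mem_coe, mem_filter, hS, mem_filter] at ht
      obtain ⟨⟨_, htk⟩, htlow⟩ := ht
      have hkey := keyf_low_succ e n htlow
      have hwf := wgt_flipf e n t
      have hwl := wgt_le e n t
      rw [mem_coe, hShigh, mem_filter, hS, mem_filter]
      refine ⟨⟨mem_univ _, by omega⟩, by omega⟩
    · intro a _ b _ hab
      have := congrArg (flipf e n) hab
      rwa [flipf_flipf, flipf_flipf] at this
    · intro t ht
      rw [mem_coe, hShigh, mem_filter, hS, mem_filter] at ht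
      obtain ⟨⟨_, htk⟩, hthigh⟩ := ht
      have hwf := wgt_flipf e n t
      have hwl := wgt_le e n t
      have hlowf : wgt e n (flipf e n t) < n - wgt e n (flipf e n t) := by omega
      have hkey : keyf e n (flipf e n t) = keyf e n t + 1 := by
        have h := keyf_low_succ e n hlowf
        rwa [flipf_flipf] at h
      obtain ⟨c1, hc1⟩ := keyf_even_of_high e n (le_of_lt hthigh)
      obtain ⟨c2, hc2⟩ := keyf_even_of_high e n (le_of_lt hs)
      refine ⟨flipf e n t, ?_, flipf_flipf e n t⟩
      rw [mem_coe, hSlow, mem_filter, hS, mem_filter]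
      exact ⟨⟨mem_univ _, by omega⟩, hlowf⟩
  have hrS : rnk (keyf e n) s = S.card := rfl
  exact ⟨Shigh.card, by omega⟩

lemma rnk_pair (mm : ℕ) {s : Fin n → 𝒳}
    (h1 : rnk (keyf e n) s < 2 * mm) (h2 : 2 * wgt e n s ≠ n) :
    rnk (keyf e n) (flipf e n s) < 2 * mm := by
  have hwl := wgt_le e n s
  rcases Nat.lt_or_ge (wgt e n s) (n - wgt e n s) with hlow | hhigh
  · have hkey := keyf_low_succ e n hlow
    have := rnk_lt_rnk (keyf_inj e n) (show keyf e n (flipf e n s) < keyf e n s by omega)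
    omega
  · have hshigh : n - wgt e n s < wgt e n s := by omega
    have hwf := wgt_flipf e n s
    have hlowf : wgt e n (flipf e n s) < n - wgt e n (flipf e n s) := by omega
    have hkey : keyf e n (flipf e n s) = keyf e n s + 1 := by
      have h := keyf_low_succ e n hlowf
      rwa [flipf_flipf] at h
    have hsucc := rnk_succ (keyf_inj e n) hkey
    obtain ⟨c, hc⟩ := rnk_even_of_strict_high e n hshigh
    omega

end Main2
end Stmt1Aux

/-- For a binary alphabet there is a single (universal) n-length fixed-to-variable code φ
whose length `n·R(φ;ε,P)` is within one bit of the optimum `n·R*(n,ε,P)` attainable when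
the distribution P is known, simultaneously for all ε ∈ (0,1) and all distributions P. -/
theorem stmt1 (𝒳 : Type*) [Fintype 𝒳] (hX : Fintype.card 𝒳 = 2) (n : ℕ) (hn : 0 < n) :
    ∃ φ : (Fin n → 𝒳) → List Bool, Function.Injective φ ∧
      ∀ ε ∈ Set.Ioo (0 : ℝ) 1, ∀ P : 𝒳 → ℝ, IsDist P →
        (n : ℝ) * epsRate n φ ε P ≤
          (n : ℝ) * sInf {r : ℝ | ∃ ψ : (Fin n → 𝒳) → List Bool,
            Function.Injective ψ ∧ r = epsRate n ψ ε P} + 1 := by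
  classical
  obtain ⟨e⟩ : Nonempty (𝒳 ≃ Fin 2) := ⟨Fintype.equivFinOfCardEq hX⟩
  have hφinj0 : Function.Injective (fun s => Stmt1Aux.enc (Stmt1Aux.rnk (Stmt1Aux.keyf e n) s)) :=
    fun a b h => Stmt1Aux.rnk_inj (Stmt1Aux.keyf_inj e n) (Stmt1Aux.enc_inj h)
  refine ⟨fun s => Stmt1Aux.enc (Stmt1Aux.rnk (Stmt1Aux.keyf e n) s), hφinj0, ?_⟩
  intro ε hε P hP
  rw [Set.mem_Ioo] at hε
  set φ : (Fin n → 𝒳) → List Bool :=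
    fun s => Stmt1Aux.enc (Stmt1Aux.rnk (Stmt1Aux.keyf e n) s) with hφ
  have hφinj : Function.Injective φ := hφinj0
  have hn' : (0:ℝ) < (n:ℝ) := by exact_mod_cast hn
  have hlen : ∀ s, (φ s).length = Nat.log2 (Stmt1Aux.rnk (Stmt1Aux.keyf e n) s + 1) :=
    fun s => Stmt1Aux.length_enc _
  have hq0 : ∀ s : Fin n → 𝒳, (0:ℝ) ≤ ∏ i, P (s i) :=
    fun s => Finset.prod_nonneg (fun i _ => hP.1 _)
  have hqform : ∀ s : Fin n → 𝒳, (∏ i, P (s i))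
      = P (e.symm 1) ^ (Stmt1Aux.wgt e n s) * P (e.symm 0) ^ (n - Stmt1Aux.wgt e n s) := by
    intro s
    have h1 : ∏ i ∈ Finset.univ.filter (fun i => e (s i) = 1), P (s i)
        = P (e.symm 1) ^ (Stmt1Aux.wgt e n s) := by
      have hc : ∀ i ∈ Finset.univ.filter (fun i => e (s i) = 1), P (s i) = P (e.symm 1) := by
        intro i hi
        rw [Finset.mem_filter] at hi
        rw [← hi.2, Equiv.symm_apply_apply]
      rw [Finset.prod_congr rfl hc, Finset.prod_const]
      rfl
    have h2 : ∏ i ∈ Finset.univ.filter (fun i => ¬ e (s i) = 1), P (s i)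
        = P (e.symm 0) ^ (n - Stmt1Aux.wgt e n s) := by
      have hc : ∀ i ∈ Finset.univ.filter (fun i => ¬ e (s i) = 1), P (s i) = P (e.symm 0) := by
        intro i hi
        rw [Finset.mem_filter] at hi
        have hj : e (s i) = 0 := by
          have hd : ∀ j : Fin 2, ¬ j = 1 → j = 0 := by decide
          exact hd _ hi.2
        rw [← hj, Equiv.symm_apply_apply]
      rw [Finset.prod_congr rfl hc, Finset.prod_const, Stmt1Aux.card_filter_not_wgt]
    rw [← Finset.prod_filter_mul_prod_filter_not Finset.univ (fun i => e (s i) = 1)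
      (fun i => P (s i)), h1, h2]
  have hite : ∀ (p : Prop) (h1 h2 : Decidable p) (a b : ℝ),
      @ite _ p h1 a b = @ite _ p h2 a b := by
    intro p h1 h2 a b
    cases Subsingleton.elim h1 h2
    rfl
  have hseq : ∀ (S : (Fin n → 𝒳) → Prop) (_ : DecidablePred S),
      seqProb P n S = ∑ xs ∈ Finset.univ.filter S, ∏ i, P (xs i) := by
    intro S inst
    simp only [seqProb]
    rw [Finset.sum_filter]
    exact Finset.sum_congr rfl fun xs _ => hite _ _ _ _ _
  have htot : ∑ xs : Fin n → 𝒳, ∏ i, P (xs i) = 1 := by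
    have h := Finset.prod_univ_sum (fun _ : Fin n => (Finset.univ : Finset 𝒳)) (fun _ x => P x)
    rw [Fintype.piFinset_univ] at h
    rw [← h]
    simp only [hP.2, Finset.prod_const_one]
  have main : ∀ ψ : (Fin n → 𝒳) → List Bool, Function.Injective ψ →
      sInf {k : ℕ | seqProb P n (fun xs => k < (φ xs).length) ≤ ε}
        ≤ sInf {k : ℕ | seqProb P n (fun xs => k < (ψ xs).length) ≤ ε} + 1 := by
    intro ψ hψ
    set Kψ := sInf {k : ℕ | seqProb P n (fun xs => k < (ψ xs).length) ≤ ε} with hKψdef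
    have hKψmem : seqProb P n (fun xs => Kψ < (ψ xs).length) ≤ ε := by
      have hne : {k : ℕ | seqProb P n (fun xs => k < (ψ xs).length) ≤ ε}.Nonempty := by
        refine ⟨Finset.univ.sup (fun xs => (ψ xs).length), ?_⟩
        rw [Set.mem_setOf_eq]
        have hzero : seqProb P n
            (fun xs => Finset.univ.sup (fun ys => (ψ ys).length) < (ψ xs).length) = 0 := by
          simp only [seqProb]
          apply Finset.sum_eq_zero
          intro xs _
          rw [if_neg]
          push_neg
          exact Finset.le_sup (f := fun ys => (ψ ys).length) (Finset.mem_univ xs)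
        rw [hzero]
        exact le_of_lt hε.1
      exact Nat.sInf_mem hne
    set m := 2 ^ (Kψ + 1) - 1 with hm
    set q : (Fin n → 𝒳) → ℝ := fun s => ∏ i, P (s i) with hq
    set Aψ := Finset.univ.filter (fun xs => ¬ Kψ < (ψ xs).length) with hAψ
    have hAψcard : Aψ.card ≤ m := by
      have hmap : ∀ xs ∈ Aψ, Stmt1Aux.num (ψ xs) ∈ Finset.Ico 1 (2 ^ (Kψ + 1)) := by
        intro xs hxs
        rw [hAψ, Finset.mem_filter] at hxs
        rw [Finset.mem_Ico]
        refine ⟨Stmt1Aux.num_pos _, ?_⟩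
        calc Stmt1Aux.num (ψ xs) < 2 ^ ((ψ xs).length + 1) := Stmt1Aux.num_lt _
        _ ≤ 2 ^ (Kψ + 1) := Nat.pow_le_pow_right (by norm_num) (by
            have := hxs.2
            omega)
      have hinj : Set.InjOn (fun xs => Stmt1Aux.num (ψ xs)) ↑Aψ :=
        fun a _ b _ h => hψ (Stmt1Aux.num_inj h)
      have hcard := Finset.card_le_card_of_injOn _ hmap hinj
      rw [Nat.card_Ico] at hcard
      omega
    have hAq : 1 - ε ≤ ∑ xs ∈ Aψ, q xs := by
      have hsplit := Finset.sum_filter_add_sum_filter_not Finset.univ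
        (fun xs : Fin n → 𝒳 => Kψ < (ψ xs).length) q
      rw [hseq _ _] at hKψmem
      have hKψmem' : ∑ x ∈ Finset.filter (fun x => Kψ < (ψ x).length) Finset.univ, q x ≤ ε :=
        hKψmem
      rw [htot] at hsplit
      linarith
    have hUble : ∑ xs ∈ Aψ, q xs ≤
        ∑ xs ∈ Finset.univ.filter (fun s => Stmt1Aux.rnk (Stmt1Aux.keyf e n) s < 2 * m), q xs := by
      by_cases hpc : P (e.symm 0) ≤ P (e.symm 1)
      · refine Stmt1Aux.master (Stmt1Aux.keyf e n) (Stmt1Aux.wgt e n) n (Stmt1Aux.flipf e n) m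
          (Stmt1Aux.keyf_inj e n) (Stmt1Aux.wgt_flipf e n) (Stmt1Aux.wgt_le e n)
          (Stmt1Aux.flipf_flipf e n)
          (fun s h1 h2 => Stmt1Aux.rnk_pair e n m h1 h2)
          (fun s t h => Stmt1Aux.min_le_of_keyf_le e n h)
          q hq0 ?_ Aψ hAψcard
        intro s t hst
        show (∏ i, P (s i)) ≤ ∏ i, P (t i)
        rw [hqform s, hqform t]
        exact Stmt1Aux.pow_prod_mono (hP.1 (e.symm 0)) hpc hst (Stmt1Aux.wgt_le e n t)
      · have hpc' : P (e.symm 1) ≤ P (e.symm 0) := le_of_not_ge hpc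
        refine Stmt1Aux.master (Stmt1Aux.keyf e n) (fun s => n - Stmt1Aux.wgt e n s) n
          (Stmt1Aux.flipf e n) m (Stmt1Aux.keyf_inj e n)
          ?_ (fun s => Nat.sub_le n _) (Stmt1Aux.flipf_flipf e n)
          ?_ ?_ q hq0 ?_ Aψ hAψcard
        · intro s
          show n - Stmt1Aux.wgt e n (Stmt1Aux.flipf e n s) = n - (n - Stmt1Aux.wgt e n s)
          rw [Stmt1Aux.wgt_flipf]
        · intro s h1 h2
          refine Stmt1Aux.rnk_pair e n m h1 ?_
          have := Stmt1Aux.wgt_le e n s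
          omega
        · intro s t h
          have h1 := Stmt1Aux.min_le_of_keyf_le e n h
          have h2 := Stmt1Aux.wgt_le e n s
          have h3 := Stmt1Aux.wgt_le e n t
          omega
        · intro s t hst
          show (∏ i, P (s i)) ≤ ∏ i, P (t i)
          rw [hqform s, hqform t]
          have hws := Stmt1Aux.wgt_le e n s
          have hwt := Stmt1Aux.wgt_le e n t
          have hcalc := Stmt1Aux.pow_prod_mono (hP.1 (e.symm 1)) hpc' hst
            (Nat.sub_le n (Stmt1Aux.wgt e n t))
          have e1 : n - (n - Stmt1Aux.wgt e n s) = Stmt1Aux.wgt e n s := by omega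
          have e2 : n - (n - Stmt1Aux.wgt e n t) = Stmt1Aux.wgt e n t := by omega
          rw [e1, e2] at hcalc
          rw [mul_comm (P (e.symm 1) ^ (Stmt1Aux.wgt e n s)),
            mul_comm (P (e.symm 1) ^ (Stmt1Aux.wgt e n t))]
          exact hcalc
    have hsubset : (Finset.univ.filter fun s => Stmt1Aux.rnk (Stmt1Aux.keyf e n) s < 2 * m)
        ⊆ Finset.univ.filter (fun xs => ¬ Kψ + 1 < (φ xs).length) := by
      intro s hs
      rw [Finset.mem_filter] at hs ⊢
      refine ⟨Finset.mem_univ _, ?_⟩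
      rw [hlen s]
      have hrs := hs.2
      have hpow : (1:ℕ) ≤ 2 ^ (Kψ + 1) := Nat.one_le_two_pow
      have hlog : Nat.log2 (Stmt1Aux.rnk (Stmt1Aux.keyf e n) s + 1) < Kψ + 2 := by
        rw [Nat.log2_lt (by omega)]
        have hp2 : (2:ℕ) ^ (Kψ + 2) = 2 * 2 ^ (Kψ + 1) := by ring
        omega
      omega
    have hBq : 1 - ε ≤ ∑ xs ∈ Finset.univ.filter (fun xs => ¬ Kψ + 1 < (φ xs).length), q xs :=
      le_trans hAq (le_trans hUble
        (Finset.sum_le_sum_of_subset_of_nonneg hsubset (fun i _ _ => hq0 i)))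
    have hmem2 : (Kψ + 1) ∈ {k : ℕ | seqProb P n (fun xs => k < (φ xs).length) ≤ ε} := by
      rw [Set.mem_setOf_eq, hseq _ _]
      show ∑ x ∈ Finset.filter (fun xs => Kψ + 1 < (φ xs).length) Finset.univ, q x ≤ ε
      have hsplit := Finset.sum_filter_add_sum_filter_not Finset.univ
        (fun xs : Fin n → 𝒳 => Kψ + 1 < (φ xs).length) q
      rw [htot] at hsplit
      linarith
    exact Nat.sInf_le hmem2
  -- final arithmetic
  have hcan : ∀ x : ℝ, (n:ℝ) * (x / n) = x := fun x => by field_simp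
  set Kφ := sInf {k : ℕ | seqProb P n (fun xs => k < (φ xs).length) ≤ ε} with hKφ
  have hSSne : {r : ℝ | ∃ ψ : (Fin n → 𝒳) → List Bool,
      Function.Injective ψ ∧ r = epsRate n ψ ε P}.Nonempty :=
    ⟨epsRate n φ ε P, φ, hφinj, rfl⟩
  have hle : ((Kφ : ℝ) - 1) / n ≤ sInf {r : ℝ | ∃ ψ : (Fin n → 𝒳) → List Bool,
      Function.Injective ψ ∧ r = epsRate n ψ ε P} := by
    apply le_csInf hSSne
    rintro rr ⟨ψ, hψinj, rfl⟩
    rw [div_le_iff₀ hn']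
    have h := main ψ hψinj
    rw [epsRate]
    have hcast : (Kφ : ℝ) ≤
        ((sInf {k : ℕ | seqProb P n (fun xs => k < (ψ xs).length) ≤ ε} : ℕ) : ℝ) + 1 := by
      exact_mod_cast h
    rw [div_mul_cancel₀ _ (ne_of_gt hn')]
    linarith
  rw [epsRate]
  have hKeq : (n:ℝ) * ((Kφ : ℝ) / n) = (Kφ : ℝ) := hcan _
  rw [← hKφ, hKeq]
  have h2 := (div_le_iff₀ hn').1 hle
  linarith [mul_comm ((sInf {r : ℝ | ∃ ψ : (Fin n → 𝒳) → List Bool,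
    Function.Injective ψ ∧ r = epsRate n ψ ε P})) (n:ℝ)]
end

section
/- Let t be an n-type on the finite alphabet 𝒳 and T_t its type class. Then n·f(t) + C⁻ ≤ log₂|T_t| ≤ n·f(t), where f(t) = H(t) + ((1−|𝒳|)/(2n))·log₂ n + (1/(2n))·Σ_{x∈𝒳} min{log₂ n, −log₂ t(x)} (with the convention that the summand equals log₂ n when t(x)=0), and C⁻ = ((1−|𝒳|)/2)·log₂(2π) − |𝒳|/(12 ln 2). -/
open scoped BigOperators
open Classical

/-- The function `f(t) = H(t) + ((1−|𝒳|)/(2n))·log₂ n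
+ (1/(2n))·∑ₓ min{log₂ n, −log₂ t(x)}`, with the convention that the summand is
`log₂ n` when `t(x) = 0`. -/
noncomputable def fbound {𝒳 : Type*} [Fintype 𝒳] (n : ℕ) (t : 𝒳 → ℝ) : ℝ :=
  ent t + (1 - (Fintype.card 𝒳 : ℝ)) / (2 * n) * Real.logb 2 n
    + (1 / (2 * n)) * ∑ x,
        (if t x = 0 then Real.logb 2 n else min (Real.logb 2 n) (-(Real.logb 2 (t x))))


namespace TCProof
open Finset Nat

variable {𝒳 : Type*} [Fintype 𝒳] {n : ℕ}

variable {𝒳 : Type*} [Fintype 𝒳] {n : ℕ}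

/-- count of symbol x in sequence -/
noncomputable def cnt (f : Fin n → 𝒳) (x : 𝒳) : ℕ := (Finset.univ.filter fun i => f i = x).card

lemma cnt_comp (f : Fin n → 𝒳) (σ : Equiv.Perm (Fin n)) (x : 𝒳) :
    cnt (f ∘ σ) x = cnt f x := by
  apply Finset.card_equiv σ
  intro i
  simp [cnt, Function.comp]

lemma cnt_eq_card_subtype (f : Fin n → 𝒳) (x : 𝒳) :
    cnt f x = Fintype.card {i : Fin n // f i = x} := by
  simp [cnt, Fintype.card_subtype]

/-- stabilizer equiv -/
noncomputable def stabEquiv (w : Fin n → 𝒳) :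
    {τ : Equiv.Perm (Fin n) // ∀ i, w (τ i) = w i} ≃ (∀ x : 𝒳, Equiv.Perm {i : Fin n // w i = x}) where
  toFun τ x := Equiv.Perm.subtypePerm τ.1 (fun i => by rw [τ.2 i])
  invFun π := ⟨(Equiv.sigmaFiberEquiv w).symm.trans ((Equiv.sigmaCongrRight π).trans
      (Equiv.sigmaFiberEquiv w)), fun i => (π (w i) ⟨i, rfl⟩).2⟩
  left_inv τ := by
    apply Subtype.ext; apply Equiv.ext; intro i; rfl
  right_inv π := by
    funext x; apply Equiv.ext; rintro ⟨i, hi⟩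
    apply Subtype.ext
    subst hi
    rfl

lemma stab_card (w : Fin n → 𝒳) :
    Fintype.card {τ : Equiv.Perm (Fin n) // ∀ i, w (τ i) = w i} = ∏ x, (cnt w x)! := by
  rw [Fintype.card_congr (stabEquiv w), Fintype.card_pi]
  refine Finset.prod_congr rfl fun x _ => ?_
  rw [Fintype.card_perm, cnt_eq_card_subtype]

lemma exists_perm {f w : Fin n → 𝒳} (h : ∀ x, cnt f x = cnt w x) :
    ∃ σ : Equiv.Perm (Fin n), ∀ i, w (σ i) = f i := by
  have e : ∀ x, {i : Fin n // f i = x} ≃ {i : Fin n // w i = x} := fun x =>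
    Fintype.equivOfCardEq (by rw [← cnt_eq_card_subtype, ← cnt_eq_card_subtype, h])
  exact ⟨Equiv.ofFiberEquiv e, fun i => Equiv.ofFiberEquiv_map e i⟩

lemma fiber_card (w f : Fin n → 𝒳) (h : ∀ x, cnt f x = cnt w x) :
    (Finset.univ.filter fun σ : Equiv.Perm (Fin n) => w ∘ σ = f).card = ∏ x, (cnt w x)! := by
  obtain ⟨σ₀, hσ₀⟩ := exists_perm h
  rw [← Fintype.card_subtype, ← stab_card w]
  apply Fintype.card_congr
  refine ⟨fun σ => ⟨σ₀.symm.trans σ.1, fun i => ?_⟩, fun τ => ⟨σ₀.trans τ.1, funext fun i => ?_⟩,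
      fun σ => ?_, fun τ => ?_⟩
  · have := congrFun σ.2 (σ₀.symm i)
    simp only [Function.comp_apply] at this
    simp only [Equiv.trans_apply, this]
    rw [← hσ₀ (σ₀.symm i), Equiv.apply_symm_apply]
  · simp only [Function.comp_apply, Equiv.trans_apply, τ.2 (σ₀ i), hσ₀ i]
  · apply Subtype.ext; apply Equiv.ext; intro i; simp
  · apply Subtype.ext; apply Equiv.ext; intro i; simp

lemma key_count (w : Fin n → 𝒳) :
    (Finset.univ.filter fun f : Fin n → 𝒳 => ∀ x, cnt f x = cnt w x).card * ∏ x, (cnt w x)!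
      = n ! := by
  classical
  have h1 : (Finset.univ : Finset (Equiv.Perm (Fin n))).card = n ! := by
    rw [Finset.card_univ, Fintype.card_perm, Fintype.card_fin]
  rw [← h1]
  rw [Finset.card_eq_sum_card_fiberwise
    (f := fun σ : Equiv.Perm (Fin n) => w ∘ σ)
    (t := Finset.univ.filter fun f : Fin n → 𝒳 => ∀ x, cnt f x = cnt w x)
    (fun σ _ => by simp [cnt_comp])]
  rw [Finset.sum_congr rfl (fun f hf => fiber_card w f (Finset.mem_filter.mp hf).2),
    Finset.sum_const, smul_eq_mul]


def sigmaFinEquiv (k : 𝒳 → ℕ) (x : 𝒳) : {p : Σ y : 𝒳, Fin (k y) // p.1 = x} ≃ Fin (k x) where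
  toFun p := Fin.cast (congrArg k p.2) p.1.2
  invFun j := ⟨⟨x, j⟩, rfl⟩
  left_inv := by rintro ⟨⟨y, j⟩, h⟩; subst h; rfl
  right_inv j := rfl

lemma exists_w (k : 𝒳 → ℕ) (hsum : ∑ x, k x = n) : ∃ w : Fin n → 𝒳, ∀ x, cnt w x = k x := by
  have hcard : Fintype.card (Σ y : 𝒳, Fin (k y)) = Fintype.card (Fin n) := by
    simp [Fintype.card_sigma, hsum]
  obtain e := Fintype.equivOfCardEq hcard
  refine ⟨fun i => (e.symm i).1, fun x => ?_⟩
  rw [cnt_eq_card_subtype]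
  rw [Fintype.card_congr ((e.subtypeEquiv (fun p => by
    rw [Equiv.symm_apply_apply])).symm.trans (sigmaFinEquiv k x))]
  simp


end TCProof

namespace TCProof
open Finset Nat Real Stirling

/-- `Λ = log √(2π)` -/
noncomputable def Lam : ℝ := (1/2) * Real.log (2 * Real.pi)

lemma Lam_nonneg : 0 ≤ Lam := by
  have : (1:ℝ) ≤ 2 * Real.pi := by nlinarith [Real.pi_gt_three]
  have := Real.log_nonneg this
  unfold Lam; linarith

lemma diff_ge (n : ℕ) :
    (1/3 : ℝ) * ((1 / (2 * (n+1 : ℕ) + 1 : ℝ))^2) ≤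
      Real.log (stirlingSeq (n+1)) - Real.log (stirlingSeq (n+2)) := by
  have h := log_stirlingSeq_diff_hasSum n
  have := le_hasSum h 0 (fun j _ => by positivity)
  simpa using this.trans_eq' (by norm_num)

lemma diff_le (n : ℕ) :
    Real.log (stirlingSeq (n+1)) - Real.log (stirlingSeq (n+2)) ≤
      1 / (12 * (n+1 : ℝ) * (n+2 : ℝ)) := by
  set x : ℝ := ((1 : ℝ) / (2 * (n+1 : ℕ) + 1)) ^ 2 with hx
  have hx0 : 0 ≤ x := sq_nonneg _
  have hx1 : x < 1 := by
    rw [hx, one_div, inv_pow]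
    exact inv_lt_one_of_one_lt₀ (one_lt_pow₀ (by push_cast; nlinarith [Nat.cast_nonneg (α := ℝ) n]) two_ne_zero)
  have hgeo : HasSum (fun j : ℕ => (1/3 : ℝ) * x ^ (j+1)) ((1/3) * (x / (1 - x))) := by
    have := (hasSum_geometric_of_lt_one hx0 hx1).mul_left ((1/3 : ℝ) * x)
    have h2 : ∀ j : ℕ, (1/3 : ℝ) * x * x ^ j = (1/3) * x ^ (j+1) := fun j => by ring
    simp_rw [h2] at this
    convert this using 1
    · rfl
    · ring
  have hle : Real.log (stirlingSeq (n+1)) - Real.log (stirlingSeq (n+2)) ≤ (1/3) * (x / (1-x)) := by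
    refine hasSum_le (fun j => ?_) (log_stirlingSeq_diff_hasSum n) hgeo
    have h1 : (1 : ℝ) / (2 * (j+1 : ℕ) + 1) ≤ 1/3 := by
      rw [div_le_div_iff₀ (by positivity) (by norm_num)]
      push_cast; nlinarith [Nat.cast_nonneg (α := ℝ) j]
    exact mul_le_mul_of_nonneg_right h1 (pow_nonneg hx0 _)
  refine hle.trans_eq ?_
  have hx1' : (0:ℝ) < 1 - x := by linarith
  have h1x : (1:ℝ) - x ≠ 0 := by linarith
  have e1 : (1:ℝ)/3 * (x/(1-x)) = x / (3*(1-x)) := by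
    field_simp
  rw [e1, div_eq_div_iff (by positivity) (by positivity), hx]
  push_cast
  field_simp
  ring

lemma mono_a : Monotone (fun n : ℕ => Real.log (stirlingSeq (n+1)) - 1/(12*((n:ℝ)+1))) := by
  apply monotone_nat_of_le_succ
  intro n
  have h := diff_le n
  push_cast at h
  have e : 1/(12*((n:ℝ)+1)) - 1/(12*((n:ℝ)+1+1)) = 1/(12*((n:ℝ)+1)*((n:ℝ)+2)) := by
    rw [div_sub_div _ _ (by positivity) (by positivity), div_eq_div_iff (by positivity) (by positivity)]
    ring
  simp only [Nat.cast_add, Nat.cast_one]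
  linarith

lemma anti_b : Antitone (fun n : ℕ => Real.log (stirlingSeq (n+1)) - 1/(12*((n:ℝ)+1)+1)) := by
  apply antitone_nat_of_succ_le
  intro n
  have h := diff_ge n
  push_cast at h
  set m : ℝ := (n:ℝ)+1 with hm
  have hm1 : (1:ℝ) ≤ m := by rw [hm]; linarith [Nat.cast_nonneg (α := ℝ) n]
  have key : 1/(12*m+1) - 1/(12*(m+1)+1) ≤ 1/3 * (1/(2*m+1))^2 := by
    have e2 : (1:ℝ)/3 * (1/(2*m+1))^2 = 1/(3*(2*m+1)^2) := by
      rw [div_pow, one_pow]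
      simp [one_div, mul_inv, mul_comm]
    rw [e2, div_sub_div _ _ (by positivity) (by positivity)]
    rw [div_le_div_iff₀ (by positivity) (by positivity)]
    nlinarith [sq_nonneg m]
  simp only [Nat.cast_add, Nat.cast_one]
  have : (1:ℝ)/(2*m+1)^2 = (1/(2*m+1))^2 := by rw [div_pow, one_pow]
  linarith

lemma tend_log : Filter.Tendsto (fun n : ℕ => Real.log (stirlingSeq (n+1))) Filter.atTop
    (nhds (Real.log (Real.sqrt Real.pi))) := by
  have h1 : Filter.Tendsto (fun n : ℕ => stirlingSeq (n+1)) Filter.atTop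
      (nhds (Real.sqrt Real.pi)) :=
    tendsto_stirlingSeq_sqrt_pi.comp (Filter.tendsto_add_atTop_nat 1)
  have hpos : (0:ℝ) < Real.sqrt Real.pi := Real.sqrt_pos.mpr Real.pi_pos
  exact ((Real.continuousAt_log hpos.ne').tendsto.comp h1)

lemma tend_aux (c : ℝ) : Filter.Tendsto (fun n : ℕ => 1/(12*((n:ℝ)+1)+c)) Filter.atTop (nhds 0) := by
  have h1 : Filter.Tendsto (fun n : ℕ => 12*((n:ℝ)+1)+c) Filter.atTop Filter.atTop := by
    apply Filter.tendsto_atTop_add_const_right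
    apply Filter.Tendsto.const_mul_atTop (show (0:ℝ) < 12 by norm_num)
    exact Filter.tendsto_atTop_add_const_right _ _ tendsto_natCast_atTop_atTop
  simpa [one_div, Function.comp_def] using tendsto_inv_atTop_zero.comp h1

lemma stirling_le (n : ℕ) :
    Real.log (stirlingSeq (n+1)) ≤ Real.log (Real.sqrt Real.pi) + 1/(12*((n:ℝ)+1)) := by
  have hlim : Filter.Tendsto (fun n : ℕ => Real.log (stirlingSeq (n+1)) - 1/(12*((n:ℝ)+1)))
      Filter.atTop (nhds (Real.log (Real.sqrt Real.pi))) := by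
    have h0 := tend_log.sub (tend_aux 0)
    rw [sub_zero] at h0
    have e0 : (fun n : ℕ => Real.log (stirlingSeq (n+1)) - 1/(12*((n:ℝ)+1)))
        = fun n : ℕ => Real.log (stirlingSeq (n+1)) - 1/(12*((n:ℝ)+1)+0) := by
      funext n; norm_num
    rw [e0]; exact h0
  have := mono_a.ge_of_tendsto hlim n
  linarith

lemma stirling_ge (n : ℕ) :
    Real.log (Real.sqrt Real.pi) + 1/(12*((n:ℝ)+1)+1) ≤ Real.log (stirlingSeq (n+1)) := by
  have hlim : Filter.Tendsto (fun n : ℕ => Real.log (stirlingSeq (n+1)) - 1/(12*((n:ℝ)+1)+1))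
      Filter.atTop (nhds (Real.log (Real.sqrt Real.pi))) := by
    have h0 := tend_log.sub (tend_aux 1)
    rw [sub_zero] at h0
    exact h0
  have := anti_b.le_of_tendsto hlim n
  linarith

lemma log_factorial_eq (j : ℕ) (hj : 1 ≤ j) :
    Real.log (j !) = Real.log (stirlingSeq j) + ((j:ℝ) + 1/2) * Real.log j - (j:ℝ)
      + (1/2) * Real.log 2 := by
  have hj0 : (0:ℝ) < (j:ℝ) := by exact_mod_cast hj
  have h := log_stirlingSeq_formula j
  have h2 : Real.log (2*(j:ℝ)) = Real.log 2 + Real.log j := Real.log_mul (by norm_num) hj0.ne'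
  have h3 : Real.log ((j:ℝ) / Real.exp 1) = Real.log j - 1 := by
    rw [Real.log_div hj0.ne' (Real.exp_ne_zero 1), Real.log_exp]
  rw [h2, h3] at h
  linarith

lemma lam_eq : Lam = Real.log (Real.sqrt Real.pi) + (1/2) * Real.log 2 := by
  rw [Lam, Real.log_sqrt Real.pi_pos.le, Real.log_mul (by norm_num) Real.pi_ne_zero]
  ring

lemma robbins_up (j : ℕ) (hj : 1 ≤ j) :
    Real.log (j !) ≤ ((j:ℝ) + 1/2) * Real.log j - (j:ℝ) + Lam + 1/(12*(j:ℝ)) := by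
  obtain ⟨m, rfl⟩ : ∃ m, j = m + 1 := ⟨j - 1, (Nat.succ_pred_eq_of_pos hj).symm⟩
  have h1 := stirling_le m
  have h2 := log_factorial_eq (m+1) hj
  rw [lam_eq]
  push_cast at h1 h2 ⊢
  linarith

lemma robbins_lo (j : ℕ) (hj : 1 ≤ j) :
    ((j:ℝ) + 1/2) * Real.log j - (j:ℝ) + Lam + 1/(12*(j:ℝ)+1) ≤ Real.log (j !) := by
  obtain ⟨m, rfl⟩ : ∃ m, j = m + 1 := ⟨j - 1, (Nat.succ_pred_eq_of_pos hj).symm⟩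
  have h1 := stirling_ge m
  have h2 := log_factorial_eq (m+1) hj
  rw [lam_eq]
  push_cast at h1 h2 ⊢
  linarith


variable {𝒳 : Type*} [Fintype 𝒳]

lemma core (n : ℕ) (hn : 0 < n) (k : 𝒳 → ℕ) (hsum : ∑ x, k x = n)
    (N : ℕ) (hN : N * ∏ x, (k x)! = n !) :
    (((n:ℝ)+1/2) * Real.log n - ∑ x, ((k x:ℝ)+1/2) * Real.log (k x))
        + (1 - (Fintype.card 𝒳 : ℝ)) * Lam - (Fintype.card 𝒳 : ℝ)/12 ≤ Real.log N
    ∧ Real.log N ≤ ((n:ℝ)+1/2) * Real.log n - ∑ x, ((k x:ℝ)+1/2) * Real.log (k x) := by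
  set s : Finset 𝒳 := Finset.univ.filter (fun x => k x ≠ 0) with hs
  have hsum_s : ∑ x ∈ s, k x = n := by rw [hs, Finset.sum_filter_ne_zero]; exact hsum
  have hNpos : 0 < N := by
    rcases Nat.eq_zero_or_pos N with h | h
    · rw [h, zero_mul] at hN; exact absurd hN.symm (Nat.factorial_pos n).ne'
    · exact h
  have hprodpos : ∀ x : 𝒳, ((k x)! : ℝ) ≠ 0 := fun x => by positivity
  have hlogN : Real.log N = Real.log (n !) - ∑ x ∈ s, Real.log ((k x)!) := by
    have h0 : Real.log ((N : ℝ) * ∏ x, ((k x)! : ℝ)) = Real.log (n ! : ℝ) := by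
      rw [← Nat.cast_prod, ← Nat.cast_mul, hN]
    rw [Real.log_mul (by positivity) (by positivity), Real.log_prod (fun x _ => hprodpos x)]
      at h0
    have h1 : ∑ x, Real.log ((k x)! : ℝ) = ∑ x ∈ s, Real.log ((k x)!) := by
      refine (Finset.sum_subset (Finset.filter_subset _ _) (fun x _ hx => ?_)).symm
      rw [Finset.mem_filter, not_and, not_not] at hx
      rw [hx (Finset.mem_univ x)]
      simp
    rw [h1] at h0
    linarith
  have hRsum : ∑ x, ((k x:ℝ)+1/2) * Real.log (k x)
      = ∑ x ∈ s, ((k x:ℝ)+1/2) * Real.log (k x) := by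
    refine (Finset.sum_subset (Finset.filter_subset _ _) (fun x _ hx => ?_)).symm
    rw [Finset.mem_filter, not_and, not_not] at hx
    rw [hx (Finset.mem_univ x)]
    simp
  have hm_le : s.card ≤ Fintype.card 𝒳 := by
    rw [← Finset.card_univ]; exact Finset.card_filter_le _ _
  have hs_ne : s.Nonempty := by
    rcases Finset.eq_empty_or_nonempty s with h | h
    · exfalso; rw [h, Finset.sum_empty] at hsum_s; omega
    · exact h
  have hm1 : 1 ≤ s.card := Finset.card_pos.mpr hs_ne
  have hk1 : ∀ x ∈ s, 1 ≤ k x := fun x hx => by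
    rw [hs, Finset.mem_filter] at hx; omega
  have hkn : ∀ x ∈ s, k x ≤ n := fun x hx => by
    rw [← hsum_s]; exact Finset.single_le_sum (fun y _ => Nat.zero_le _) hx
  have hsum_cast : ∑ x ∈ s, (k x : ℝ) = (n : ℝ) := by exact_mod_cast congrArg Nat.cast hsum_s
  have hcast_m_d : (s.card : ℝ) ≤ (Fintype.card 𝒳 : ℝ) := by exact_mod_cast hm_le
  have hn1 : (1:ℝ) ≤ (n:ℝ) := by exact_mod_cast hn
  constructor
  · -- lower bound
    have h1 := robbins_lo n hn
    have h2 : ∀ x ∈ s, Real.log ((k x)!)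
        ≤ ((k x:ℝ)+1/2) * Real.log (k x) - (k x:ℝ) + Lam + 1/12 := by
      intro x hx
      have hb := robbins_up (k x) (hk1 x hx)
      have h12 : 1/(12*((k x):ℝ)) ≤ 1/12 := by
        have : (1:ℝ) ≤ (k x : ℝ) := by exact_mod_cast hk1 x hx
        rw [div_le_div_iff₀ (by linarith) (by norm_num)]
        linarith
      linarith
    have hS : ∑ x ∈ s, Real.log ((k x)!)
        ≤ ∑ x ∈ s, ((k x:ℝ)+1/2) * Real.log (k x) - (n:ℝ) + s.card * (Lam + 1/12) := by
      calc ∑ x ∈ s, Real.log ((k x)!)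
          ≤ ∑ x ∈ s, (((k x:ℝ)+1/2) * Real.log (k x) - (k x:ℝ) + Lam + 1/12) :=
            Finset.sum_le_sum h2
        _ = ∑ x ∈ s, ((k x:ℝ)+1/2) * Real.log (k x) - (n:ℝ) + s.card * (Lam + 1/12) := by
            rw [Finset.sum_add_distrib, Finset.sum_add_distrib, Finset.sum_sub_distrib,
              hsum_cast, Finset.sum_const, Finset.sum_const, nsmul_eq_mul, nsmul_eq_mul]
            ring
    have hmul : (1 - (Fintype.card 𝒳 : ℝ)) * Lam ≤ (1 - (s.card : ℝ)) * Lam :=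
      mul_le_mul_of_nonneg_right (by linarith) Lam_nonneg
    have hpos : (0:ℝ) < 1/(12*(n:ℝ)+1) := by positivity
    rw [hRsum, hlogN]
    nlinarith [hS, h1, hmul, hpos]
  · -- upper bound
    rcases Nat.lt_or_ge s.card 2 with hm2 | hm2
    · -- s.card = 1
      have hcard1 : s.card = 1 := by omega
      obtain ⟨x₀, hx₀⟩ := Finset.card_eq_one.mp hcard1
      have hk₀ : k x₀ = n := by
        rw [hx₀, Finset.sum_singleton] at hsum_s; exact hsum_s
      have hprod : ∏ x, (k x)! = n ! := by
        have : ∏ x, (k x)! = ∏ x ∈ s, (k x)! := by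
          refine (Finset.prod_subset (Finset.filter_subset _ _) (fun x _ hx => ?_)).symm
          rw [Finset.mem_filter, not_and, not_not] at hx
          rw [hx (Finset.mem_univ x)]
          simp
        rw [this, hx₀, Finset.prod_singleton, hk₀]
      have hN1 : N = 1 := by
        rw [hprod] at hN
        have := Nat.factorial_pos n
        exact Nat.eq_of_mul_eq_mul_right this (by omega)
      rw [hRsum, hx₀, Finset.sum_singleton, hk₀, hN1]
      simp
    · -- 2 ≤ s.card
      have h1 := robbins_up n hn
      have h2 : ∀ x ∈ s, ((k x:ℝ)+1/2) * Real.log (k x) - (k x:ℝ) + Lam + 1/(12*(n:ℝ)+1)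
          ≤ Real.log ((k x)!) := by
        intro x hx
        have hb := robbins_lo (k x) (hk1 x hx)
        have h12 : 1/(12*(n:ℝ)+1) ≤ 1/(12*((k x):ℝ)+1) := by
          have h1' : (1:ℝ) ≤ (k x : ℝ) := by exact_mod_cast hk1 x hx
          have h2' : ((k x):ℝ) ≤ (n:ℝ) := by exact_mod_cast hkn x hx
          rw [div_le_div_iff₀ (by linarith) (by linarith)]
          linarith
        linarith
      have hS : ∑ x ∈ s, ((k x:ℝ)+1/2) * Real.log (k x) - (n:ℝ)
          + s.card * (Lam + 1/(12*(n:ℝ)+1)) ≤ ∑ x ∈ s, Real.log ((k x)!) := by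
        calc ∑ x ∈ s, ((k x:ℝ)+1/2) * Real.log (k x) - (n:ℝ)
              + s.card * (Lam + 1/(12*(n:ℝ)+1))
            = ∑ x ∈ s, (((k x:ℝ)+1/2) * Real.log (k x) - (k x:ℝ) + Lam + 1/(12*(n:ℝ)+1)) := by
              rw [Finset.sum_add_distrib, Finset.sum_add_distrib, Finset.sum_sub_distrib,
                hsum_cast, Finset.sum_const, Finset.sum_const, nsmul_eq_mul, nsmul_eq_mul]
              ring
          _ ≤ ∑ x ∈ s, Real.log ((k x)!) := Finset.sum_le_sum h2
      have hm2' : (2:ℝ) ≤ (s.card : ℝ) := by exact_mod_cast hm2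
      have hmul : (1 - (s.card : ℝ)) * Lam ≤ 0 :=
        mul_nonpos_of_nonpos_of_nonneg (by linarith) Lam_nonneg
      have hfrac : 1/(12*(n:ℝ)) ≤ 2 * (1/(12*(n:ℝ)+1)) := by
        rw [mul_one_div, div_le_div_iff₀ (by linarith) (by linarith)]
        linarith
      have hP : (0:ℝ) ≤ 1/(12*(n:ℝ)+1) := by positivity
      have hfrac2 : 2 * (1/(12*(n:ℝ)+1)) ≤ (s.card:ℝ) * (1/(12*(n:ℝ)+1)) :=
        mul_le_mul_of_nonneg_right hm2' hP
      rw [hRsum, hlogN]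
      nlinarith [hS, h1, hmul, hfrac, hfrac2]


end TCProof

/-- Bounds on the size of a type class (Lemma 2): for an n-type t,
`n·f(t) + C⁻ ≤ log₂|T_t| ≤ n·f(t)` where
`C⁻ = ((1−|𝒳|)/2)·log₂(2π) − |𝒳|/(12 ln 2)`. -/
theorem stmt4 {𝒳 : Type*} [Fintype 𝒳] (n : ℕ) (hn : 0 < n)
    (t : 𝒳 → ℝ) (ht : IsDist t) (htype : ∀ x, ∃ m : ℕ, t x = (m : ℝ) / n) :
    (n : ℝ) * fbound n t
        + ((1 - (Fintype.card 𝒳 : ℝ)) / 2 * Real.logb 2 (2 * Real.pi)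
            - (Fintype.card 𝒳 : ℝ) / (12 * Real.log 2))
      ≤ Real.logb 2 (typeClassCard (𝒳 := 𝒳) n t) ∧
    Real.logb 2 (typeClassCard (𝒳 := 𝒳) n t) ≤ (n : ℝ) * fbound n t := by
  classical
  have hnR : (0:ℝ) < (n:ℝ) := by exact_mod_cast hn
  choose k hk using htype
  -- sum of k equals n
  have hsum : ∑ x, k x = n := by
    have h1 : ∑ x, ((k x : ℝ) / n) = 1 := by
      rw [← ht.2]; exact Finset.sum_congr rfl fun x _ => (hk x).symm
    have h2 : (∑ x, (k x:ℝ)) = (n:ℝ) := by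
      rw [← Finset.sum_div] at h1
      field_simp at h1
      exact h1
    exact_mod_cast h2
  obtain ⟨w, hw⟩ := TCProof.exists_w k hsum
  -- identification of the type class
  have hset : (Finset.univ.filter fun ys : Fin n → 𝒳 => typeOf ys = t)
      = (Finset.univ.filter fun f : Fin n → 𝒳 => ∀ x, TCProof.cnt f x = TCProof.cnt w x) := by
    apply Finset.filter_congr
    intro ys _
    constructor
    · intro h x
      rw [hw x]
      have h1 := congrFun h x
      rw [typeOf, hk x] at h1
      have h2 : ((TCProof.cnt ys x : ℝ)) / n = ((k x : ℝ)) / n := h1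
      field_simp [hnR.ne'] at h2
      exact_mod_cast h2
    · intro h
      funext x
      rw [typeOf, hk x]
      rw [show (Finset.univ.filter fun i => ys i = x).card = TCProof.cnt ys x from rfl, h x, hw x]
  have hN : typeClassCard (𝒳 := 𝒳) n t * ∏ x, Nat.factorial (k x) = Nat.factorial n := by
    rw [typeClassCard, hset]
    have h := TCProof.key_count w
    simp only [hw] at h ⊢
    exact h
  have hcore := TCProof.core n hn k hsum _ hN
  set N := typeClassCard (𝒳 := 𝒳) n t with hNdef
  have hlog2 : (0:ℝ) < Real.log 2 := Real.log_pos one_lt_two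
  have hlb : ∀ y : ℝ, Real.logb 2 y * Real.log 2 = Real.log y := fun y => by
    rw [Real.logb, div_mul_cancel₀ _ hlog2.ne']
  -- the main identity
  have hk0 : ∀ x, t x = 0 ↔ k x = 0 := fun x => by
    rw [hk x]
    constructor
    · intro h
      field_simp at h
      exact_mod_cast h
    · intro h; simp [h]
  have hident : (n:ℝ) * fbound n t * Real.log 2
      = ((n:ℝ)+1/2) * Real.log n - ∑ x, ((k x:ℝ)+1/2) * Real.log (k x) := by
    rw [fbound]
    have h_ent : (n:ℝ) * ent t * Real.log 2
        = ∑ x, (k x:ℝ) * (Real.log n - Real.log (k x)) := by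
      rw [ent, Finset.mul_sum, Finset.sum_mul]
      refine Finset.sum_congr rfl fun x _ => ?_
      by_cases hkx : k x = 0
      · rw [(hk0 x).mpr hkx] at *
        rw [hkx]
        simp
      · have hkxR : (0:ℝ) < (k x : ℝ) := by
          have : 0 < k x := Nat.pos_of_ne_zero hkx
          exact_mod_cast this
        have htx : t x = (k x : ℝ) / n := hk x
        have h1 : Real.logb 2 (t x) * Real.log 2 = Real.log (t x) := hlb _
        have h2 : Real.log (t x) = Real.log (k x) - Real.log n := by
          rw [htx, Real.log_div hkxR.ne' hnR.ne']
        have h3 : (n:ℝ) * t x = (k x : ℝ) := by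
          rw [htx]; field_simp
        calc (n:ℝ) * -(t x * Real.logb 2 (t x)) * Real.log 2
            = -(((n:ℝ) * t x) * (Real.logb 2 (t x) * Real.log 2)) := by ring
          _ = -((k x : ℝ) * (Real.log (k x) - Real.log n)) := by rw [h3, h1, h2]
          _ = (k x:ℝ) * (Real.log n - Real.log (k x)) := by ring
    have h_C : ∀ x : 𝒳, (if t x = 0 then Real.logb 2 n
        else min (Real.logb 2 n) (-(Real.logb 2 (t x)))) * Real.log 2
        = Real.log n - Real.log (k x) := by
      intro x
      by_cases hkx : k x = 0
      · rw [if_pos ((hk0 x).mpr hkx), hlb, hkx]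
        simp
      · rw [if_neg (fun h => hkx ((hk0 x).mp h))]
        have hkxR : (0:ℝ) < (k x : ℝ) := by
          have : 0 < k x := Nat.pos_of_ne_zero hkx
          exact_mod_cast this
        have hk1R : (1:ℝ) ≤ (k x : ℝ) := by
          have : 1 ≤ k x := Nat.one_le_iff_ne_zero.mpr hkx
          exact_mod_cast this
        rw [min_mul_of_nonneg _ _ hlog2.le, hlb, neg_mul, hlb]
        have h2 : Real.log (t x) = Real.log (k x) - Real.log n := by
          rw [hk x, Real.log_div hkxR.ne' hnR.ne']
        rw [h2]
        rw [min_eq_right (by linarith [Real.log_nonneg hk1R])]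
        ring
    have hCsum : (∑ x, (if t x = 0 then Real.logb 2 n
        else min (Real.logb 2 n) (-(Real.logb 2 (t x))))) * Real.log 2
        = ∑ x, (Real.log n - Real.log (k x)) := by
      rw [Finset.sum_mul]
      exact Finset.sum_congr rfl fun x _ => h_C x
    have e3 : ∑ x, (k x : ℝ) = (n:ℝ) := by exact_mod_cast congrArg Nat.cast hsum
    have e1 : ∑ x, (k x:ℝ) * (Real.log n - Real.log (k x))
        = (n:ℝ) * Real.log n - ∑ x, (k x:ℝ) * Real.log (k x) := by
      simp only [mul_sub]
      rw [Finset.sum_sub_distrib, ← Finset.sum_mul, e3]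
    have e2 : ∑ x, (Real.log n - Real.log (k x))
        = (Fintype.card 𝒳 : ℝ) * Real.log n - ∑ x, Real.log (k x) := by
      rw [Finset.sum_sub_distrib, Finset.sum_const, Finset.card_univ, nsmul_eq_mul]
    have e4 : ∑ x, ((k x:ℝ)+1/2) * Real.log (k x)
        = ∑ x, (k x:ℝ) * Real.log (k x) + (1/2) * ∑ x, Real.log (k x) := by
      simp only [add_mul]
      rw [Finset.sum_add_distrib, Finset.mul_sum]
    have expand : (n:ℝ) * (ent t + (1 - (Fintype.card 𝒳 : ℝ)) / (2 * n) * Real.logb 2 n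
          + (1 / (2 * n)) * ∑ x, (if t x = 0 then Real.logb 2 n
            else min (Real.logb 2 n) (-(Real.logb 2 (t x))))) * Real.log 2
        = (n:ℝ) * ent t * Real.log 2
          + (1 - (Fintype.card 𝒳 : ℝ))/2 * (Real.logb 2 n * Real.log 2)
          + (1/2) * ((∑ x, (if t x = 0 then Real.logb 2 n
            else min (Real.logb 2 n) (-(Real.logb 2 (t x))))) * Real.log 2) := by
      field_simp
    rw [expand, h_ent, hCsum, hlb, e1, e2, e4]
    ring
  have hCm : ((1 - (Fintype.card 𝒳 : ℝ)) / 2 * Real.logb 2 (2 * Real.pi)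
      - (Fintype.card 𝒳 : ℝ) / (12 * Real.log 2)) * Real.log 2
      = (1 - (Fintype.card 𝒳 : ℝ)) * TCProof.Lam - (Fintype.card 𝒳 : ℝ)/12 := by
    rw [TCProof.Lam, Real.logb]
    field_simp
  constructor
  · rw [show Real.logb 2 (N:ℝ) = Real.log N / Real.log 2 from rfl, le_div_iff₀ hlog2]
    calc ((n:ℝ) * fbound n t + ((1 - (Fintype.card 𝒳 : ℝ)) / 2 * Real.logb 2 (2 * Real.pi)
          - (Fintype.card 𝒳 : ℝ) / (12 * Real.log 2))) * Real.log 2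
        = (n:ℝ) * fbound n t * Real.log 2
          + ((1 - (Fintype.card 𝒳 : ℝ)) / 2 * Real.logb 2 (2 * Real.pi)
            - (Fintype.card 𝒳 : ℝ) / (12 * Real.log 2)) * Real.log 2 := by ring
      _ = (((n:ℝ)+1/2) * Real.log n - ∑ x, ((k x:ℝ)+1/2) * Real.log (k x))
          + ((1 - (Fintype.card 𝒳 : ℝ)) * TCProof.Lam - (Fintype.card 𝒳 : ℝ)/12) := by
          rw [hident, hCm]
      _ ≤ Real.log N := by have := hcore.1; linarith
  · rw [show Real.logb 2 (N:ℝ) = Real.log N / Real.log 2 from rfl, div_le_iff₀ hlog2]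
    rw [hident]
    exact hcore.2
end

section
/- Let 𝒳 be a finite alphabet, μ a probability measure on the simplex of distributions on 𝒳, and define the mixture distribution P̄ on 𝒳^n by P̄(x^n)=∫ P^n(x^n) dμ(P), where P^n is the n-fold product of P. Let φ be an n-length fixed-to-variable code, ε∈(0,1), and let k be a nonnegative integer such that P(ℓ(φ(X^n)) ≥ k) ≤ ε whenever X^n is i.i.d.∼P, for μ-almost every P. Then for every τ>0, ε ≥ P̄( log₂(1/P̄(X^n)) ≥ k+τ ) − 2^{−τ}, where on the right-hand side X^n is distributed according to P̄. -/
open scoped BigOperators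
open Classical

open MeasureTheory

/-- The mixture distribution `P̄(xⁿ) = ∫ Pⁿ(xⁿ) dμ(P)` of i.i.d. distributions with
single-letter marginals drawn according to μ. -/
noncomputable def mixProb {𝒳 : Type*} [Fintype 𝒳] (μ : Measure (𝒳 → ℝ)) (n : ℕ)
    (xs : Fin n → 𝒳) : ℝ :=
  ∫ P, (∏ i, P (xs i)) ∂μ

def gval : List Bool → ℕ
  | [] => 1
  | b :: t => 2 * gval t + cond b 1 0

lemma gval_pos (l : List Bool) : 1 ≤ gval l := by
  induction l with
  | nil => simp [gval]
  | cons b t ih => simp only [gval]; cases b <;> simp <;> omega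

lemma gval_lt (l : List Bool) : gval l < 2 ^ (l.length + 1) := by
  induction l with
  | nil => simp [gval]
  | cons b t ih =>
    simp only [gval, List.length_cons, pow_succ]
    cases b <;> simp <;> omega

lemma gval_inj : Function.Injective gval := by
  intro l1
  induction l1 with
  | nil =>
    intro l2 h
    cases l2 with
    | nil => rfl
    | cons c s =>
      exfalso
      have := gval_pos s
      simp only [gval] at h
      cases c <;> simp at h <;> omega
  | cons b t ih =>
    intro l2 h
    cases l2 with
    | nil =>
      exfalso
      have := gval_pos t
      simp only [gval] at h
      cases b <;> simp at h <;> omega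
    | cons c s =>
      simp only [gval] at h
      have hb : b = c ∧ gval t = gval s := by
        cases b <;> cases c <;> simp only [cond_true, cond_false] at h <;>
          first
            | exact ⟨rfl, by omega⟩
            | exact absurd h (by omega)
      rw [hb.1, ih hb.2]

/-- Finite-blocklength converse via mixtures (Theorem 4): if μ is a probability measure
concentrated on distributions P for which the code φ satisfies
`P(ℓ(φ(Xⁿ)) ≥ k) ≤ ε`, then for every τ > 0,
`ε ≥ P̄(log₂(1/P̄(Xⁿ)) ≥ k + τ) − 2^{−τ}` where Xⁿ ~ P̄. -/
theorem stmt11 {𝒳 : Type*} [Fintype 𝒳] (n : ℕ) (hn : 0 < n)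
    (μ : Measure (𝒳 → ℝ)) [IsProbabilityMeasure μ]
    (φ : (Fin n → 𝒳) → List Bool) (hφ : Function.Injective φ)
    (ε : ℝ) (hε : ε ∈ Set.Ioo (0 : ℝ) 1) (k : ℕ)
    (hcode : ∀ᵐ P ∂μ, IsDist P ∧ seqProb P n (fun xs => k ≤ (φ xs).length) ≤ ε) :
    ∀ τ : ℝ, 0 < τ →
      (∑ xs : Fin n → 𝒳,
          if (k : ℝ) + τ ≤ Real.logb 2 (1 / mixProb μ n xs) then mixProb μ n xs else 0)
        - (2 : ℝ) ^ (-τ) ≤ ε := by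
  intro τ hτ
  set m : (Fin n → 𝒳) → ℝ := mixProb μ n with hm
  set f : (Fin n → 𝒳) → (𝒳 → ℝ) → ℝ := fun xs P => ∏ i, P (xs i) with hf
  -- a.e. bounds on f
  have hae : ∀ xs : Fin n → 𝒳, ∀ᵐ P ∂μ, 0 ≤ f xs P ∧ f xs P ≤ 1 := by
    intro xs
    filter_upwards [hcode] with P hP
    have h0 : ∀ x, 0 ≤ P x := hP.1.1
    have h1 : ∀ x, P x ≤ 1 := by
      intro x
      calc P x ≤ ∑ y, P y := Finset.single_le_sum (fun y _ => h0 y) (Finset.mem_univ x)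
        _ = 1 := hP.1.2
    exact ⟨Finset.prod_nonneg fun i _ => h0 _,
      Finset.prod_le_one (fun i _ => h0 _) (fun i _ => h1 _)⟩
  have hmeas : ∀ xs : Fin n → 𝒳, Measurable (f xs) := by
    intro xs
    exact Finset.measurable_prod _ fun i _ => measurable_pi_apply _
  have hint : ∀ xs : Fin n → 𝒳, Integrable (f xs) μ := by
    intro xs
    refine (integrable_const (1 : ℝ)).mono' (hmeas xs).aestronglyMeasurable ?_
    filter_upwards [hae xs] with P hP
    rw [Real.norm_eq_abs, abs_of_nonneg hP.1]; exact hP.2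
  have hmnn : ∀ xs, 0 ≤ m xs := by
    intro xs
    exact integral_nonneg_of_ae ((hae xs).mono fun P hP => hP.1)
  -- the two events
  set B : Finset (Fin n → 𝒳) := Finset.univ.filter fun xs => (φ xs).length < k with hB
  set C : Finset (Fin n → 𝒳) := Finset.univ.filter fun xs => k ≤ (φ xs).length with hC
  set A : Finset (Fin n → 𝒳) :=
    Finset.univ.filter fun xs => (k : ℝ) + τ ≤ Real.logb 2 (1 / m xs) with hA
  have hLHS : (∑ xs : Fin n → 𝒳,
      if (k : ℝ) + τ ≤ Real.logb 2 (1 / m xs) then m xs else 0) = ∑ xs ∈ A, m xs := by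
    rw [hA, Finset.sum_filter]
  -- bound on C : ∑_{C} m ≤ ε
  have hCsum : ∑ xs ∈ C, m xs ≤ ε := by
    have h1 : ∑ xs ∈ C, m xs = ∫ P, (∑ xs ∈ C, f xs P) ∂μ := by
      rw [integral_finset_sum _ fun xs _ => hint xs]
      rfl
    rw [h1]
    have h2 : ∫ P, (∑ xs ∈ C, f xs P) ∂μ ≤ ∫ _P, ε ∂μ := by
      refine integral_mono_ae (integrable_finset_sum _ fun xs _ => hint xs)
        (integrable_const ε) ?_
      filter_upwards [hcode] with P hP
      have : ∑ xs ∈ C, f xs P = seqProb P n (fun xs => k ≤ (φ xs).length) := by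
        rw [hC, Finset.sum_filter, seqProb]
        refine Finset.sum_congr rfl fun xs _ => ?_
        congr
      rw [this]; exact hP.2
    simpa using h2
  -- each xs in A has small mass
  have hAsmall : ∀ xs ∈ A, m xs ≤ (2 : ℝ) ^ (-(((k : ℝ) + τ))) := by
    intro xs hxs
    rw [hA, Finset.mem_filter] at hxs
    rcases eq_or_lt_of_le (hmnn xs) with h0 | h0
    · rw [← h0]; positivity
    · have hlog : Real.logb 2 (1 / m xs) = -Real.logb 2 (m xs) := by
        rw [one_div, Real.logb_inv]
      have hle : Real.logb 2 (m xs) ≤ -((k : ℝ) + τ) := by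
        have := hxs.2; rw [hlog] at this; linarith
      calc m xs = (2 : ℝ) ^ Real.logb 2 (m xs) := (Real.rpow_logb two_pos (by norm_num) h0).symm
        _ ≤ (2 : ℝ) ^ (-(((k : ℝ) + τ))) :=
            Real.rpow_le_rpow_of_exponent_le one_le_two hle
  -- cardinality bound
  have hcard : (B.card : ℝ) ≤ 2 ^ k := by
    have : B.card ≤ (Finset.range (2 ^ k)).card := by
      apply Finset.card_le_card_of_injOn (fun xs => gval (φ xs))
      · intro xs hxs
        rw [hB, Finset.mem_coe, Finset.mem_filter] at hxs
        rw [Finset.mem_coe, Finset.mem_range]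
        calc gval (φ xs) < 2 ^ ((φ xs).length + 1) := gval_lt _
          _ ≤ 2 ^ k := Nat.pow_le_pow_right (by norm_num) (by omega)
      · intro a _ b _ hab
        exact hφ (gval_inj hab)
    rw [Finset.card_range] at this
    exact_mod_cast (by exact_mod_cast this : (B.card : ℝ) ≤ ((2 ^ k : ℕ) : ℝ))
  -- split sum over A
  have hsplit : ∑ xs ∈ A, m xs ≤
      (∑ xs ∈ A.filter (fun xs => (φ xs).length < k), m xs) + ∑ xs ∈ C, m xs := by
    rw [← Finset.sum_filter_add_sum_filter_not A (fun xs => (φ xs).length < k) m]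
    have hsub : A.filter (fun xs => ¬ (φ xs).length < k) ⊆ C := by
      intro xs hxs
      rw [Finset.mem_filter] at hxs
      rw [hC, Finset.mem_filter]
      exact ⟨Finset.mem_univ _, by omega⟩
    have h := Finset.sum_le_sum_of_subset_of_nonneg hsub (fun xs _ _ => hmnn xs)
    linarith
  -- bound the filtered part
  have hABsum : (∑ xs ∈ A.filter (fun xs => (φ xs).length < k), m xs) ≤ (2 : ℝ) ^ (-τ) := by
    calc (∑ xs ∈ A.filter (fun xs => (φ xs).length < k), m xs)
        ≤ ∑ _xs ∈ A.filter (fun xs => (φ xs).length < k), (2 : ℝ) ^ (-(((k : ℝ) + τ))) := by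
          apply Finset.sum_le_sum
          intro xs hxs
          exact hAsmall xs (Finset.mem_of_mem_filter _ hxs)
      _ = ((A.filter (fun xs => (φ xs).length < k)).card : ℝ) * (2 : ℝ) ^ (-(((k : ℝ) + τ))) := by
          rw [Finset.sum_const, nsmul_eq_mul]
      _ ≤ (2 : ℝ) ^ k * (2 : ℝ) ^ (-(((k : ℝ) + τ))) := by
          apply mul_le_mul_of_nonneg_right _ (by positivity)
          refine le_trans ?_ hcard
          have : (A.filter (fun xs => (φ xs).length < k)) ⊆ B := by
            intro xs hxs
            rw [Finset.mem_filter] at hxs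
            rw [hB, Finset.mem_filter]
            exact ⟨Finset.mem_univ _, hxs.2⟩
          exact_mod_cast Finset.card_le_card this
      _ = (2 : ℝ) ^ (-τ) := by
          rw [← Real.rpow_natCast 2 k, ← Real.rpow_add two_pos]
          norm_num
  rw [hLHS]
  linarith
end

section
/- Let k₀ < k₁ < ⋯ < k_I be integers and set t* = 1 / (1 + Σ_{i=1}^{I} (1 − 2^{k_{i−1}−k_i})). Then: (a) for every vector (α₀,…,α_I) of nonnegative reals with Σ_i α_i ≤ 1, min_{0≤i≤I} Σ_{j=0}^{i} 2^{k_j − k_i}·α_j ≤ t*; and (b) there exists a vector (α₀,…,α_I) of nonnegative reals with Σ_i α_i ≤ 1 such that Σ_{j=0}^{i} 2^{k_j − k_i}·α_j = t* for every 0≤i≤I. In other words, t* is the optimal value of the linear program maximizing t subject to Σ_{j≤i} 2^{k_j−k_i}α_j ≥ t for all i, Σ_i α_i ≤ 1, and α_i ≥ 0. -/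
open scoped BigOperators
open Finset

private lemma prec15 (k : ℕ → ℤ) (α : ℕ → ℝ) (i : ℕ) :
    ∑ j ∈ range (i + 2), (2 : ℝ) ^ (k j - k (i + 1)) * α j
      = (2 : ℝ) ^ (k i - k (i + 1)) * ∑ j ∈ range (i + 1), (2 : ℝ) ^ (k j - k i) * α j
        + α (i + 1) := by
  rw [Finset.sum_range_succ, Finset.mul_sum]
  congr 1
  · apply Finset.sum_congr rfl
    intro j _
    rw [← mul_assoc, ← zpow_add₀ (two_ne_zero (α := ℝ))]
    congr 1
    ring
  · simp

private lemma ident15 (k : ℕ → ℤ) (α : ℕ → ℝ) (n : ℕ) :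
    ∑ i ∈ range (n + 1), α i
      = (∑ j ∈ range (n + 1), (2 : ℝ) ^ (k j - k n) * α j)
        + ∑ i ∈ range n, (1 - (2 : ℝ) ^ (k i - k (i + 1)))
            * ∑ j ∈ range (i + 1), (2 : ℝ) ^ (k j - k i) * α j := by
  induction n with
  | zero => simp
  | succ n ih =>
      have hrec := prec15 k α n
      rw [Finset.sum_range_succ, ih,
        Finset.sum_range_succ
          (f := fun i => (1 - (2 : ℝ) ^ (k i - k (i + 1)))
            * ∑ j ∈ range (i + 1), (2 : ℝ) ^ (k j - k i) * α j),
        hrec]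
      generalize (∑ j ∈ range (n + 1), (2 : ℝ) ^ (k j - k n) * α j) = A
      generalize (∑ i ∈ range n, (1 - (2 : ℝ) ^ (k i - k (i + 1)))
            * ∑ j ∈ range (i + 1), (2 : ℝ) ^ (k j - k i) * α j) = B
      ring

/-- The linear program from the prefix-code converse: for strictly increasing integers
`k₀ < k₁ < ⋯ < k_I`, the optimal value of maximizing t subject to
`∑_{j≤i} 2^{k_j−k_i} α_j ≥ t` for all i, `∑ᵢ αᵢ ≤ 1`, `αᵢ ≥ 0` is
`t* = 1/(1 + ∑_{i=1}^I (1 − 2^{k_{i−1}−k_i}))`: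
(a) every feasible α has `min_i ∑_{j≤i} 2^{k_j−k_i} α_j ≤ t*`, and
(b) some feasible α attains `∑_{j≤i} 2^{k_j−k_i} α_j = t*` for every i. -/
theorem stmt15 (I : ℕ) (k : ℕ → ℤ) (hk : ∀ i < I, k i < k (i + 1)) :
    (∀ α : ℕ → ℝ, (∀ i, 0 ≤ α i) → ∑ i ∈ Finset.range (I + 1), α i ≤ 1 →
      ∃ i ≤ I, ∑ j ∈ Finset.range (i + 1), (2 : ℝ) ^ (k j - k i) * α j ≤
        1 / (1 + ∑ i ∈ Finset.range I, (1 - (2 : ℝ) ^ (k i - k (i + 1))))) ∧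
    (∃ α : ℕ → ℝ, (∀ i, 0 ≤ α i) ∧ ∑ i ∈ Finset.range (I + 1), α i ≤ 1 ∧
      ∀ i ≤ I, ∑ j ∈ Finset.range (i + 1), (2 : ℝ) ^ (k j - k i) * α j =
        1 / (1 + ∑ i ∈ Finset.range I, (1 - (2 : ℝ) ^ (k i - k (i + 1))))) := by
  set S : ℝ := ∑ i ∈ Finset.range I, (1 - (2 : ℝ) ^ (k i - k (i + 1))) with hS
  have hc : ∀ i < I, (2 : ℝ) ^ (k i - k (i + 1)) ≤ 1 := by
    intro i hi
    have h1 : k i - k (i + 1) ≤ 0 := by have := hk i hi; omega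
    calc (2 : ℝ) ^ (k i - k (i + 1)) ≤ (2 : ℝ) ^ (0 : ℤ) :=
          zpow_le_zpow_right₀ one_le_two h1
      _ = 1 := by norm_num
  have hSnonneg : 0 ≤ S := by
    apply Finset.sum_nonneg
    intro i hi
    have := hc i (Finset.mem_range.mp hi)
    linarith
  have hpos : 0 < 1 + S := by linarith
  set t : ℝ := 1 / (1 + S) with ht
  have htpos : 0 < t := by positivity
  constructor
  · intro α hα hsum
    by_contra h
    push_neg at h
    have hP : ∀ i ≤ I, t < ∑ j ∈ Finset.range (i + 1), (2 : ℝ) ^ (k j - k i) * α j := by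
      intro i hi
      exact (h i hi)
    have hkey := ident15 k α I
    have h1 : t + S * t < ∑ i ∈ Finset.range (I + 1), α i := by
      rw [hkey, hS, Finset.sum_mul]
      apply add_lt_add_of_lt_of_le (hP I le_rfl)
      apply Finset.sum_le_sum
      intro i hi
      have hiI := Finset.mem_range.mp hi
      have h2 : 1 - (2 : ℝ) ^ (k i - k (i + 1)) ≥ 0 := by
        have := hc i hiI; linarith
      exact mul_le_mul_of_nonneg_left (hP i hiI.le).le h2
    have : t + S * t = 1 := by
      field_simp [ht]
      rw [ht]; exact one_div_mul_cancel hpos.ne'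
    linarith
  · refine ⟨fun i => if i = 0 then t else if i ≤ I then t * (1 - (2 : ℝ) ^ (k (i-1) - k i)) else 0,
      ?_, ?_, ?_⟩
    · intro i
      rcases Nat.eq_zero_or_pos i with h0 | h0
      · simp [h0, htpos.le]
      · by_cases hiI : i ≤ I
        · have hle : (2 : ℝ) ^ (k (i-1) - k i) ≤ 1 := by
            have h3 : i - 1 + 1 = i := by omega
            rw [← h3]; exact hc (i-1) (by omega)
          simp only [if_neg (by omega : ¬ i = 0), if_pos hiI]
          nlinarith [htpos, hle]
        · simp [if_neg (by omega : ¬ i = 0), if_neg hiI]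
    · have hterm : ∀ i ∈ Finset.range I,
          (if i + 1 = 0 then t else if i + 1 ≤ I then
            t * (1 - (2 : ℝ) ^ (k (i + 1 - 1) - k (i + 1))) else 0)
          = t * (1 - (2 : ℝ) ^ (k i - k (i + 1))) := by
        intro i hi
        have hiI := Finset.mem_range.mp hi
        rw [if_neg (by omega), if_pos (by omega)]
        norm_num
      rw [Finset.sum_range_succ', Finset.sum_congr rfl hterm, ← Finset.mul_sum, ← hS,
        if_pos rfl]
      have h1 : t * S + t = 1 := by
        rw [ht]; field_simp; ring
      linarith
    · intro i
      induction i with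
      | zero => intro _; simp
      | succ n ih =>
        intro hn1
        rw [prec15, ih (by omega)]
        rw [if_neg (by omega : ¬ n + 1 = 0), if_pos hn1]
        norm_num
        ring
end
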